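/- arXiv:2210.13818 — 5 statements merged into one kernel-verified Lean document; each statement's English description precedes it below -/
import Mathlib

section
/- Let p₁,…,pₙ ∈ (0,1), let Ψ(w) = ∏_{i=1}^n (1 + p_i(w−1))·e^{−p_i(w−1)} with Taylor expansion Ψ(w) = 1 + Σ_{s≥1} b_s (w−1)^s around w = 1, and let σ² = Σ_{i=1}^n p_i². Then for every s ≥ 2, |b_s| ≤ (e·σ²/s)^{s/2}. -/
open Complex Filter
open scoped ENNReal NNReal Topology

/-- Key pointwise bound: `|(1+u) e^{-u}| ≤ e^{|u|²/2}`. -/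
lemma aux_factor_bound (u : ℂ) :
    ‖(1 + u) * Complex.exp (-u)‖ ≤ Real.exp (‖u‖ ^ 2 / 2) := by
  rw [norm_mul, Complex.norm_exp, Complex.neg_re]
  have key : ‖1 + u‖ ≤ Real.exp (u.re + ‖u‖ ^ 2 / 2) := by
    apply le_of_pow_le_pow_left₀ two_ne_zero (Real.exp_pos _).le
    rw [Complex.sq_norm, ← Real.exp_nat_mul]
    have h1 : Complex.normSq (1 + u) = 1 + (2 * u.re + ‖u‖ ^ 2) := by
      rw [Complex.sq_norm]
      simp [Complex.normSq_apply]
      ring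
    rw [h1]
    have h2 := Real.add_one_le_exp (2 * u.re + ‖u‖ ^ 2)
    have h3 : ((2 : ℕ) : ℝ) * (u.re + ‖u‖ ^ 2 / 2)
        = 2 * u.re + ‖u‖ ^ 2 := by push_cast; ring
    rw [h3]; linarith
  calc ‖1 + u‖ * Real.exp (-u.re)
      ≤ Real.exp (u.re + ‖u‖ ^ 2 / 2) * Real.exp (-u.re) :=
        mul_le_mul_of_nonneg_right key (Real.exp_pos _).le
    _ = Real.exp (‖u‖ ^ 2 / 2) := by rw [← Real.exp_add]; ring_nf

/-- Cauchy bound for the Taylor coefficients at `w = 1` of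
`Ψ(w) = ∏ i, (1 + pᵢ(w-1)) exp(-pᵢ(w-1))`. -/
theorem stmt_1 (n : ℕ) (p : Fin n → ℝ) (hp : ∀ i, p i ∈ Set.Ioo (0 : ℝ) 1)
    (b : ℕ → ℂ)
    (hb : ∀ w : ℂ, HasSum (fun s : ℕ => b s * (w - 1) ^ s)
      (∏ i, (1 + (p i : ℂ) * (w - 1)) * Complex.exp (-(p i : ℂ) * (w - 1))))
    (σ2 : ℝ) (hσ : σ2 = ∑ i, (p i) ^ 2) :
    ∀ s : ℕ, 2 ≤ s →
      ‖b s‖ ≤ (Real.exp 1 * σ2 / s) ^ ((s : ℝ) / 2) := by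
  intro s hs
  set F : ℂ → ℂ := fun w => ∏ i, (1 + (p i : ℂ) * (w - 1)) * Complex.exp (-(p i : ℂ) * (w - 1))
    with hF
  -- global bound on F
  have hFbound : ∀ w : ℂ, ‖F w‖ ≤ Real.exp (σ2 * ‖w - 1‖ ^ 2 / 2) := by
    intro w
    rw [hF]
    simp only
    rw [norm_prod]
    calc ∏ i, ‖(1 + (p i : ℂ) * (w - 1)) * Complex.exp (-(p i : ℂ) * (w - 1))‖
        ≤ ∏ i, Real.exp ((p i) ^ 2 * ‖w - 1‖ ^ 2 / 2) := by
          apply Finset.prod_le_prod (fun i _ => norm_nonneg _)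
          intro i _
          have := aux_factor_bound ((p i : ℂ) * (w - 1))
          have habs : ‖(p i : ℂ) * (w - 1)‖ ^ 2
              = (p i) ^ 2 * ‖w - 1‖ ^ 2 := by
            rw [norm_mul, Complex.norm_real, Real.norm_eq_abs, abs_of_pos (hp i).1]; ring
          rw [habs] at this
          rw [neg_mul]; exact this
      _ = Real.exp (σ2 * ‖w - 1‖ ^ 2 / 2) := by
          rw [← Real.exp_sum, hσ]
          congr 1
          rw [← Finset.sum_div, ← Finset.sum_mul]
  -- F is entire
  have hdiff : Differentiable ℂ F := by
    apply Differentiable.fun_finset_prod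
    intro i _
    exact ((differentiable_const _).add ((differentiable_const _).mul
      (differentiable_id.sub (differentiable_const _)))).mul
      (Complex.differentiable_exp.comp ((differentiable_const _).mul
        (differentiable_id.sub (differentiable_const _))))
  -- our power series
  set q : FormalMultilinearSeries ℂ ℂ ℂ :=
    fun m => ContinuousMultilinearMap.mkPiRing ℂ (Fin m) (b m) with hq
  have hqnorm : ∀ m, ‖q m‖ = ‖b m‖ := by
    intro m
    rw [hq]
    rw [ContinuousMultilinearMap.norm_mkPiRing]
  have hrad : (1 : ℝ≥0∞) ≤ q.radius := by
    apply FormalMultilinearSeries.le_radius_of_tendsto (l := 0)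
    have hsum := (hb 2).summable
    simp only [show (2 : ℂ) - 1 = 1 by norm_num, one_pow, mul_one] at hsum
    have := hsum.tendsto_atTop_zero
    have h2 : Tendsto (fun m : ℕ => ‖b m‖) atTop (nhds 0) := by
      simpa using this.norm
    simpa [hqnorm] using h2
  have hqf : HasFPowerSeriesAt F q 1 := by
    refine ⟨1, ?_, ?_, ?_⟩
    · exact hrad
    · norm_num
    · intro y _
      have := hb (1 + y)
      simp only [add_sub_cancel_left] at this
      have hFy : F (1 + y) = ∏ x : Fin n, (1 + (p x : ℂ) * y) * Complex.exp (-(p x : ℂ) * y) := by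
        rw [hF]
        simp only [add_sub_cancel_left]
      rw [hFy]
      convert this using 2 with m
      · rfl
      rw [hq]
      simp [ContinuousMultilinearMap.mkPiRing_apply, smul_eq_mul, mul_comm]
  -- cauchy estimate for each R > 0
  have key : ∀ R : ℝ, 0 < R →
      ‖b s‖ ≤ Real.exp (σ2 * R ^ 2 / 2) / R ^ s := by
    intro R hR
    set Rnn : ℝ≥0 := ⟨R, hR.le⟩ with hRnn
    have hRnn0 : 0 < Rnn := by exact_mod_cast hR
    have hcp := hdiff.hasFPowerSeriesOnBall 1 hRnn0
    have heq : q = cauchyPowerSeries F 1 Rnn :=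
      hqf.eq_formalMultilinearSeries hcp.hasFPowerSeriesAt
    have hbound := norm_cauchyPowerSeries_le F 1 Rnn s
    rw [← heq, hqnorm] at hbound
    have hM : (2 * Real.pi)⁻¹ * ∫ θ : ℝ in (0)..2 * Real.pi, ‖F (circleMap 1 Rnn θ)‖
        ≤ Real.exp (σ2 * R ^ 2 / 2) := by
      have hint : ∫ θ : ℝ in (0)..2 * Real.pi, ‖F (circleMap 1 Rnn θ)‖
          ≤ Real.exp (σ2 * R ^ 2 / 2) * (2 * Real.pi) := by
        have h1 : ∫ θ : ℝ in (0)..2 * Real.pi, ‖F (circleMap 1 Rnn θ)‖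
            ≤ ‖∫ θ : ℝ in (0)..2 * Real.pi, ‖F (circleMap 1 Rnn θ)‖‖ := le_abs_self _
        refine h1.trans ?_
        have h2 := intervalIntegral.norm_integral_le_of_norm_le_const
          (C := Real.exp (σ2 * R ^ 2 / 2))
          (f := fun θ : ℝ => ‖F (circleMap 1 Rnn θ)‖) (a := 0) (b := 2 * Real.pi) ?_
        · calc ‖∫ θ : ℝ in (0)..2 * Real.pi, ‖F (circleMap 1 Rnn θ)‖‖
              ≤ Real.exp (σ2 * R ^ 2 / 2) * |2 * Real.pi - 0| := h2
            _ = Real.exp (σ2 * R ^ 2 / 2) * (2 * Real.pi) := by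
                rw [sub_zero, abs_of_pos Real.two_pi_pos]
        · intro θ _
          rw [norm_norm]
          have := hFbound (circleMap 1 Rnn θ)
          have habs : ‖circleMap 1 Rnn θ - 1‖ = R := by
            rw [circleMap_sub_center]
            simp [norm_circleMap_zero, abs_of_pos hR, hRnn]
            exact abs_of_pos hR
          rw [habs] at this
          exact this
      calc (2 * Real.pi)⁻¹ * ∫ θ : ℝ in (0)..2 * Real.pi, ‖F (circleMap 1 Rnn θ)‖
          ≤ (2 * Real.pi)⁻¹ * (Real.exp (σ2 * R ^ 2 / 2) * (2 * Real.pi)) := by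
            apply mul_le_mul_of_nonneg_left hint
            positivity
        _ = Real.exp (σ2 * R ^ 2 / 2) := by
            field_simp
    calc ‖b s‖
        ≤ ((2 * Real.pi)⁻¹ * ∫ θ : ℝ in (0)..2 * Real.pi, ‖F (circleMap 1 Rnn θ)‖)
          * |(Rnn : ℝ)|⁻¹ ^ s := hbound
      _ ≤ Real.exp (σ2 * R ^ 2 / 2) * |(Rnn : ℝ)|⁻¹ ^ s := by
          apply mul_le_mul_of_nonneg_right hM
          positivity
      _ = Real.exp (σ2 * R ^ 2 / 2) / R ^ s := by
          rw [hRnn]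
          simp [abs_of_pos hR, inv_pow, div_eq_mul_inv, NNReal.coe_mk]
          exact congrArg (· ^ s) (abs_of_pos hR)
  -- now split on σ2 = 0 or σ2 > 0
  have hσ2nonneg : 0 ≤ σ2 := by
    rw [hσ]; positivity
  rcases eq_or_lt_of_le hσ2nonneg with hσ0 | hσpos
  · -- σ2 = 0 : coefficients vanish
    rw [← hσ0]
    have hzero : ‖b s‖ ≤ 0 := by
      refine le_of_forall_pos_le_add fun ε hε => ?_
      have hR : (0 : ℝ) < max 1 (2 / ε) := lt_of_lt_of_le one_pos (le_max_left _ _)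
      have := key (max 1 (2 / ε)) hR
      rw [← hσ0] at this
      simp only [zero_mul, zero_div, Real.exp_zero] at this
      have h1 : (1 : ℝ) / (max 1 (2 / ε)) ^ s ≤ 1 / (max 1 (2 / ε)) := by
        apply div_le_div_of_nonneg_left one_pos.le hR
        calc max 1 (2 / ε) = (max 1 (2 / ε)) ^ 1 := (pow_one _).symm
          _ ≤ (max 1 (2 / ε)) ^ s := by
            apply pow_le_pow_right₀ (le_max_left _ _) (by omega)
      have h2 : (1 : ℝ) / (max 1 (2 / ε)) ≤ ε / 2 := by
        rw [div_le_div_iff₀ hR (by norm_num : (0:ℝ) < 2)]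
        have : 2 / ε ≤ max 1 (2 / ε) := le_max_right _ _
        calc (1 : ℝ) * 2 = 2 := one_mul 2
          _ = (2 / ε) * ε := by field_simp
          _ ≤ max 1 (2 / ε) * ε := by
            apply mul_le_mul_of_nonneg_right this hε.le
          _ = ε * max 1 (2 / ε) := by ring
      have : ‖b s‖ ≤ ε / 2 := le_trans this (le_trans h1 h2)
      linarith
    have hrhs : (0 : ℝ) ≤ (Real.exp 1 * 0 / s) ^ ((s : ℝ) / 2) := by positivity
    linarith [norm_nonneg (b s), hzero]
  · -- σ2 > 0 : pick the optimal radius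
    have hspos : (0 : ℝ) < s := by positivity
    set R : ℝ := Real.sqrt (s / σ2) with hRdef
    have hRpos : 0 < R := Real.sqrt_pos.mpr (by positivity)
    have := key R hRpos
    have hR2 : R ^ 2 = s / σ2 := Real.sq_sqrt (by positivity)
    have hexp : Real.exp (σ2 * R ^ 2 / 2) = Real.exp 1 ^ ((s : ℝ) / 2) := by
      rw [hR2, Real.exp_one_rpow]
      congr 1
      field_simp
    have hRs : R ^ s = ((s : ℝ) / σ2) ^ ((s : ℝ) / 2) := by
      rw [hRdef, Real.sqrt_eq_rpow, ← Real.rpow_natCast (((s : ℝ) / σ2) ^ ((1:ℝ)/2)) s,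
        ← Real.rpow_mul (by positivity)]
      congr 1
      ring
    rw [hexp, hRs] at this
    refine this.trans (le_of_eq ?_)
    rw [← Real.div_rpow (Real.exp_pos 1).le (by positivity)]
    congr 1
    field_simp
end

section
/- For any real a and any natural number m, the Hermite polynomial satisfies the multiplication theorem H_m(a·x) = Σ_{l=0}^{⌊m/2⌋} a^{m−2l}·(a²−1)^l·C(m,2l)·((2l)!/(2^l·l!))·H_{m−2l}(x). -/
open Polynomial

private def dfac : ℕ → ℕ
  | 0 => 1
  | l+1 => (2*l+1) * dfac l

private lemma factorial_eq_dfac (l : ℕ) : (2*l).factorial = 2^l * l.factorial * dfac l := by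
  induction l with
  | zero => simp [dfac]
  | succ n ih =>
    have h2 : 2*(n+1) = 2*n+1+1 := by ring
    rw [h2, Nat.factorial_succ, Nat.factorial_succ, Nat.factorial_succ, ih, dfac]
    ring

private lemma dfac_cast (l : ℕ) :
    ((2 * l).factorial / (2 ^ l * l.factorial) : ℝ) = (dfac l : ℝ) := by
  rw [div_eq_iff (by positivity)]
  exact_mod_cast congrArg (Nat.cast (R := ℝ)) (by rw [factorial_eq_dfac]; ring)

private noncomputable def cc (a : ℝ) (m l : ℕ) : ℝ :=
  a ^ (m - 2*l) * (a^2 - 1)^l * (m.choose (2*l)) * (dfac l)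

private lemma hermite_deriv (n : ℕ) :
    derivative (hermite (n+1)) = ((n : Polynomial ℤ) + 1) * hermite n := by
  induction n with
  | zero => simp [hermite_one, hermite_zero]
  | succ n ih =>
    rw [hermite_succ (n+1), derivative_sub, derivative_mul, derivative_X, ih,
        derivative_mul]
    simp only [derivative_add, Polynomial.derivative_natCast, derivative_one, zero_add,
      zero_mul, one_mul, add_zero]
    have h := hermite_succ n
    push_cast
    linear_combination (-(n : Polynomial ℤ) - 1) * h

private lemma herm_rec (n : ℕ) (y : ℝ) :
    aeval y (hermite (n+2)) = y * aeval y (hermite (n+1)) - ((n:ℝ)+1) * aeval y (hermite n) := by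
  rw [hermite_succ (n+1), hermite_deriv n, map_sub, map_mul, map_mul, aeval_X]
  simp

private lemma cc_zero (a : ℝ) {m l : ℕ} (h : m < 2*l) : cc a m l = 0 := by
  simp [cc, Nat.choose_eq_zero_of_lt h]

private lemma T1 (a x : ℝ) (m l : ℕ) :
    (a*x) * (cc a (m+1) l * aeval x (hermite (m+1-2*l))) =
      a * cc a (m+1) l * aeval x (hermite (m+2-2*l)) +
        a * cc a (m+1) l * ((m:ℝ)+1-2*l) * aeval x (hermite (m-2*l)) := by
  rcases le_or_gt (2*l) m with h | h
  · have e1 : m+1-2*l = (m-2*l)+1 := by omega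
    have e2 : m+2-2*l = (m-2*l)+2 := by omega
    have e3 : ((m:ℝ)+1-2*l) = ((m-2*l : ℕ) : ℝ) + 1 := by
      rw [Nat.cast_sub h]; push_cast; ring
    rw [e1, e2, e3, herm_rec (m-2*l) x]
    ring
  · rcases eq_or_lt_of_le (Nat.succ_le_of_lt h) with h' | h'
    · have e1 : m+1-2*l = 0 := by omega
      have e2 : m+2-2*l = 1 := by omega
      have e3 : m-2*l = 0 := by omega
      have e4 : ((m:ℝ)+1-2*l) = 0 := by
        have h3 : m+1 = 2*l := by omega
        have h2 : (m:ℝ)+1 = 2*(l:ℝ) := by exact_mod_cast h3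
        linarith
      rw [e1, e2, e3, e4]
      simp [hermite_zero, hermite_one]
      ring
    · rw [cc_zero a (show m+1 < 2*l by omega)]
      ring

private lemma T2 (a : ℝ) (m l : ℕ) :
    a * cc a (m+1) l * ((m:ℝ)+1-2*l) - ((m:ℝ)+1) * cc a m l
      = ((m:ℝ)+1) * (a^(m-2*l) * (a^2-1)^(l+1) * (m.choose (2*l)) * (dfac l)) := by
  rcases le_or_gt (2*l) m with h | h
  · have e1 : m+1-2*l = (m-2*l)+1 := by omega
    have hc : (((m+1).choose (2*l) : ℝ)) * ((m:ℝ)+1-2*l) = ((m:ℝ)+1) * (m.choose (2*l)) := by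
      have := Nat.choose_mul_succ_eq m (2*l)
      have h2 : ((m.choose (2*l) * (m+1) : ℕ) : ℝ) = (((m+1).choose (2*l) * (m+1-2*l) : ℕ) : ℝ) := by
        exact_mod_cast congrArg (Nat.cast (R := ℝ)) this
      rw [Nat.cast_mul, Nat.cast_mul, Nat.cast_sub (by omega)] at h2
      push_cast at h2 ⊢
      linarith [h2]
    simp only [cc, e1]
    linear_combination (a^((m-2*l)+1) * a * (a^2-1)^l * (dfac l : ℝ)) * hc
  · rcases eq_or_lt_of_le (Nat.succ_le_of_lt h) with h' | h'
    · have e4 : ((m:ℝ)+1-2*l) = 0 := by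
        have h3 : m+1 = 2*l := by omega
        have h2 : (m:ℝ)+1 = 2*(l:ℝ) := by exact_mod_cast h3
        linarith
      have hz : m.choose (2*l) = 0 := Nat.choose_eq_zero_of_lt (by omega)
      rw [e4, hz, cc_zero a (show m < 2*l by omega)]
      push_cast; ring
    · have hz : m.choose (2*l) = 0 := Nat.choose_eq_zero_of_lt (by omega)
      rw [hz, cc_zero a (show m < 2*l by omega), cc_zero a (show m+1 < 2*l by omega)]
      push_cast; ring

private lemma T3 (a : ℝ) (m l : ℕ) :
    cc a (m+2) (l+1) - a * cc a (m+1) (l+1)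
      = ((m:ℝ)+1) * (a^(m-2*l) * (a^2-1)^(l+1) * (m.choose (2*l)) * (dfac l)) := by
  have nat1 : (m+1).choose (2*l+1) * (2*l+1) = m.choose (2*l) * (m+1) := by
    have h1 := Nat.choose_succ_right_eq (m+1) (2*l)
    have h2 := Nat.choose_mul_succ_eq m (2*l)
    exact h1.trans h2.symm
  rcases le_or_gt (2*l+1) m with h | h
  · have e1 : (m+2)-(2*l+1+1) = (m-(2*l+1))+1 := by omega
    have e2 : (m+1)-(2*l+1+1) = m-(2*l+1) := by omega
    have e3 : m-2*l = (m-(2*l+1))+1 := by omega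
    have e6 : 2*(l+1) = 2*l+1+1 := by ring
    have hP : (((m+2).choose (2*l+1+1) : ℕ) : ℝ)
        = ((m+1).choose (2*l+1) : ℝ) + ((m+1).choose (2*l+1+1) : ℝ) := by
      exact_mod_cast congrArg (Nat.cast (R := ℝ)) (Nat.choose_succ_succ' (m+1) (2*l+1))
    have hN : ((m+1).choose (2*l+1) : ℝ) * (2*(l:ℝ)+1) = (m.choose (2*l) : ℝ) * ((m:ℝ)+1) := by
      exact_mod_cast congrArg (Nat.cast (R := ℝ)) nat1
    have hd : (dfac (l+1) : ℝ) = (2*(l:ℝ)+1) * (dfac l : ℝ) := by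
      show ((((2*l+1) * dfac l : ℕ)) : ℝ) = _
      push_cast; ring
    simp only [cc, e6, e1, e2, e3, hd, hP]
    linear_combination (a^((m-(2*l+1))+1) * (a^2-1)^(l+1) * (dfac l : ℝ)) * hN
  · rcases le_or_gt (2*l) m with h' | h'
    · -- 2*l = m
      have hm : m = 2*l := by omega
      subst hm
      have c1 : (2*l+2).choose (2*(l+1)) = 1 := by
        have : 2*(l+1) = 2*l+2 := by ring
        rw [this, Nat.choose_self]
      have c2 : (2*l+1).choose (2*(l+1)) = 0 := Nat.choose_eq_zero_of_lt (by omega)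
      have c3 : (2*l).choose (2*l) = 1 := Nat.choose_self _
      have e1 : (2*l+2)-2*(l+1) = 0 := by omega
      have e3 : 2*l-2*l = 0 := by omega
      have hd : (dfac (l+1) : ℝ) = (2*(l:ℝ)+1) * (dfac l : ℝ) := by
        show ((((2*l+1) * dfac l : ℕ)) : ℝ) = _
        push_cast; ring
      simp only [cc, c1, c2, c3, e1, e3, hd]
      push_cast; ring
    · have z1 : (m+2).choose (2*(l+1)) = 0 := Nat.choose_eq_zero_of_lt (by omega)
      have z2 : (m+1).choose (2*(l+1)) = 0 := Nat.choose_eq_zero_of_lt (by omega)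
      have z3 : m.choose (2*l) = 0 := Nat.choose_eq_zero_of_lt (by omega)
      simp only [cc, z1, z2, z3]
      push_cast; ring


private lemma key (a x : ℝ) (m : ℕ) :
    aeval (a * x) (hermite m)
      = ∑ l ∈ Finset.range (m / 2 + 1), cc a m l * aeval x (hermite (m - 2*l)) := by
  induction m using Nat.strong_induction_on with
  | _ m ih =>
    have ext : ∀ (k K : ℕ), k/2+1 ≤ K →
        (∑ l ∈ Finset.range (k/2+1), cc a k l * aeval x (hermite (k-2*l)))
          = ∑ l ∈ Finset.range K, cc a k l * aeval x (hermite (k-2*l)) := by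
      intro k K hK
      apply Finset.sum_subset (Finset.range_subset_range.mpr hK)
      intro l _ hl
      have hlk : k < 2*l := by
        simp only [Finset.mem_range] at hl
        omega
      rw [cc_zero a hlk, zero_mul]
    match m with
    | 0 => simp [cc, dfac, hermite_zero]
    | 1 => simp [cc, dfac, hermite_one]
    | (m+2) =>
      have ih1 := ih (m+1) (by omega)
      have ih0 := ih m (by omega)
      rw [herm_rec m (a*x), ih1, ih0,
          ext (m+1) (m/2+1+1) (by omega), ext m (m/2+1+1) (by omega)]
      have hr : (m+2)/2+1 = m/2+1+1 := by omega
      rw [hr]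
      have step1 : (a*x) * (∑ l ∈ Finset.range (m/2+1+1), cc a (m+1) l * aeval x (hermite (m+1-2*l)))
          - ((m:ℝ)+1) * (∑ l ∈ Finset.range (m/2+1+1), cc a m l * aeval x (hermite (m-2*l)))
          = ∑ l ∈ Finset.range (m/2+1+1),
              (a * cc a (m+1) l * aeval x (hermite (m+2-2*l))
                + ((m:ℝ)+1) * (a^(m-2*l) * (a^2-1)^(l+1) * (m.choose (2*l)) * (dfac l))
                    * aeval x (hermite (m-2*l))) := by
        rw [Finset.mul_sum, Finset.mul_sum, ← Finset.sum_sub_distrib]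
        refine Finset.sum_congr rfl fun l _ => ?_
        have t1 := T1 a x m l
        have t2 := T2 a m l
        linear_combination t1 + aeval x (hermite (m - 2*l)) * t2
      have peel : ∑ l ∈ Finset.range (m/2+1+1),
            ((cc a (m+2) l - a * cc a (m+1) l) * aeval x (hermite (m+2-2*l)))
          = ∑ l ∈ Finset.range (m/2+1+1),
              ((m:ℝ)+1) * (a^(m-2*l) * (a^2-1)^(l+1) * (m.choose (2*l)) * (dfac l))
                * aeval x (hermite (m-2*l)) := by
        rw [Finset.sum_range_succ' _ (m/2+1), Finset.sum_range_succ _ (m/2+1)]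
        congr 1
        · refine Finset.sum_congr rfl fun l _ => ?_
          have e : m+2-2*(l+1) = m - 2*l := by omega
          rw [e]
          have t3 := T3 a m l
          linear_combination aeval x (hermite (m - 2*l)) * t3
        · have h0 : m.choose (2*(m/2+1)) = 0 := Nat.choose_eq_zero_of_lt (by omega)
          simp only [cc, h0, Nat.mul_zero, Nat.sub_zero, Nat.choose_zero_right, Nat.cast_zero,
            Nat.cast_one]
          push_cast [dfac]
          ring
      have e1 : ∑ l ∈ Finset.range (m/2+1+1),
            ((cc a (m+2) l - a * cc a (m+1) l) * aeval x (hermite (m+2-2*l)))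
          = (∑ l ∈ Finset.range (m/2+1+1), cc a (m+2) l * aeval x (hermite (m+2-2*l)))
            - ∑ l ∈ Finset.range (m/2+1+1), a * cc a (m+1) l * aeval x (hermite (m+2-2*l)) := by
        rw [← Finset.sum_sub_distrib]
        exact Finset.sum_congr rfl fun l _ => by ring
      rw [step1, Finset.sum_add_distrib]
      linear_combination e1 - peel

/-- Multiplication theorem for the probabilists' Hermite polynomials. -/
theorem stmt_2 (a x : ℝ) (m : ℕ) :
    Polynomial.aeval (a * x) (Polynomial.hermite m) =
      ∑ l ∈ Finset.range (m / 2 + 1),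
        a ^ (m - 2 * l) * (a ^ 2 - 1) ^ l * (m.choose (2 * l)) *
          ((2 * l).factorial / (2 ^ l * l.factorial) : ℝ) *
          Polynomial.aeval x (Polynomial.hermite (m - 2 * l)) := by
  refine (key a x m).trans (Finset.sum_congr rfl fun l _ => ?_)
  rw [dfac_cast]
  simp only [cc]
end

section
/- For every n ≥ 1 and every complex number z with |z| = √n·y (y ≥ 0), the probabilists' Hermite polynomial satisfies |H_n(z)| ≤ e^{|z|²/4} · 3^{n/2} · √(n!) · e^{1/2} · n^{1/4}. -/
open Polynomial

open scoped Nat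
open Finset

lemma aux_df (l : ℕ) : (2*l)! = (2*l)‼ * (2*l - 1)‼ := by
  cases l with
  | zero => rfl
  | succ m =>
    have := Nat.factorial_eq_mul_doubleFactorial (2*m+1)
    have h : 2*(m+1) = 2*m+1+1 := by ring
    rw [h]; simpa using this

lemma aux_nat (n k l : ℕ) (h : n = k + 2*l) :
    (2*l - 1)‼ * n.choose k * (2^l * l ! * k !) = n ! := by
  have hk : k ≤ n := by omega
  have hnk : n - k = 2*l := by omega
  have h1 : (2:ℕ)^l * l ! = (2*l)‼ := (Nat.doubleFactorial_two_mul l).symm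
  have h2 := Nat.choose_mul_factorial_mul_factorial hk
  rw [hnk] at h2
  calc (2*l - 1)‼ * n.choose k * (2^l * l ! * k !)
      = n.choose k * k ! * ((2*l)‼ * (2*l-1)‼) := by rw [← h1]; ring
    _ = n.choose k * k ! * (2*l)! := by rw [← aux_df]
    _ = n ! := h2

-- Stirling: n! ≤ e·√n·(n/e)^n for n ≥ 1
lemma aux_stirling (n : ℕ) (hn : 1 ≤ n) :
    (n ! : ℝ) ≤ Real.exp 1 * Real.sqrt n * ((n : ℝ) / Real.exp 1) ^ n := by
  obtain ⟨m, rfl⟩ := Nat.exists_eq_add_of_le hn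
  have h1 : Stirling.stirlingSeq (1 + m) ≤ Stirling.stirlingSeq 1 := by
    have := Stirling.stirlingSeq'_antitone (Nat.zero_le m)
    simpa [Nat.succ_eq_add_one, Nat.add_comm] using this
  rw [Stirling.stirlingSeq_one] at h1
  set N := 1 + m with hN
  have hNpos : (0:ℝ) < N := by positivity
  have hden : (0:ℝ) < Real.sqrt (2*N) * ((N:ℝ)/Real.exp 1)^N := by positivity
  have h2 : (N ! : ℝ) = Stirling.stirlingSeq N * (Real.sqrt (2*N) * ((N:ℝ)/Real.exp 1)^N) := by
    rw [Stirling.stirlingSeq]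
    field_simp
  rw [h2]
  have h3 : Real.sqrt (2*(N:ℝ)) = Real.sqrt 2 * Real.sqrt N := by
    rw [Real.sqrt_mul (by norm_num)]
  calc Stirling.stirlingSeq N * (Real.sqrt (2*N) * ((N:ℝ)/Real.exp 1)^N)
      ≤ (Real.exp 1 / Real.sqrt 2) * (Real.sqrt (2*N) * ((N:ℝ)/Real.exp 1)^N) := by
        apply mul_le_mul_of_nonneg_right h1 (le_of_lt hden)
    _ = Real.exp 1 * Real.sqrt N * ((N:ℝ)/Real.exp 1)^N := by
        rw [h3]; field_simp

lemma aux_key (n : ℕ) (hn : 1 ≤ n) :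
    (n ! : ℝ) * Real.exp ((n:ℝ)/2) ≤
      Real.sqrt (n !) * Real.exp (1/2) * (n:ℝ)^((1:ℝ)/4) * (n:ℝ)^((n:ℝ)/2) := by
  have hnpos : (0:ℝ) < n := by exact_mod_cast hn
  have hfpos : (0:ℝ) < n ! := by exact_mod_cast n.factorial_pos
  rw [← pow_le_pow_iff_left₀ (a := (n ! : ℝ) * Real.exp ((n:ℝ)/2)) (n := 2)
    (by positivity) (by positivity) (two_ne_zero)]
  have epow : ∀ t : ℝ, Real.exp t ^ 2 = Real.exp (2*t) := by
    intro t; rw [pow_two, ← Real.exp_add]; ring_nf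
  have e1 : ((n ! : ℝ) * Real.exp ((n:ℝ)/2))^2 = (n ! : ℝ)^2 * Real.exp n := by
    rw [mul_pow, epow, show 2*((n:ℝ)/2) = (n:ℝ) by ring]
  have e2 : (Real.sqrt (n !) * Real.exp (1/2) * (n:ℝ)^((1:ℝ)/4) * (n:ℝ)^((n:ℝ)/2))^2
      = (n ! : ℝ) * Real.exp 1 * Real.sqrt n * (n:ℝ)^(n:ℕ) := by
    have s1 : Real.sqrt (n !) ^ 2 = (n ! : ℝ) := Real.sq_sqrt hfpos.le
    have s2 : Real.exp (1/2) ^ 2 = Real.exp 1 := by rw [epow]; norm_num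
    have s3 : ((n:ℝ)^((1:ℝ)/4))^2 = Real.sqrt n := by
      rw [← Real.rpow_natCast ((n:ℝ)^((1:ℝ)/4)) 2, ← Real.rpow_mul hnpos.le,
        Real.sqrt_eq_rpow]
      norm_num
    have s4 : ((n:ℝ)^((n:ℝ)/2))^2 = (n:ℝ)^(n:ℕ) := by
      rw [← Real.rpow_natCast ((n:ℝ)^((n:ℝ)/2)) 2, ← Real.rpow_mul hnpos.le,
        show (n:ℝ)/2 * ((2:ℕ):ℝ) = (n:ℝ) by push_cast; ring, Real.rpow_natCast]
    rw [mul_pow, mul_pow, mul_pow, s1, s2, s3, s4]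
  rw [e1, e2]
  have hst := aux_stirling n hn
  have hexp : Real.exp (n:ℝ) = (Real.exp 1)^(n:ℕ) := by
    rw [← Real.exp_nat_mul]; ring_nf
  have hdiv : ((n:ℝ)/Real.exp 1)^(n:ℕ) = (n:ℝ)^(n:ℕ) / (Real.exp 1)^(n:ℕ) := div_pow _ _ _
  calc (n ! : ℝ)^2 * Real.exp n
      = (n ! : ℝ) * ((n ! : ℝ) * Real.exp n) := by ring
    _ ≤ (n ! : ℝ) * ((Real.exp 1 * Real.sqrt n * ((n : ℝ) / Real.exp 1) ^ n) * Real.exp n) := by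
        apply mul_le_mul_of_nonneg_left _ hfpos.le
        exact mul_le_mul_of_nonneg_right hst (Real.exp_pos _).le
    _ = (n ! : ℝ) * Real.exp 1 * Real.sqrt n * (n:ℝ)^(n:ℕ) := by
        rw [hdiv, hexp]
        field_simp

-- Step A
lemma aux_abs (n : ℕ) (z : ℂ) :
    ‖aeval z (hermite n)‖ ≤
      ∑ k ∈ range (n+1), |((hermite n).coeff k : ℝ)| * ‖z‖ ^ k := by
  rw [Polynomial.aeval_eq_sum_range]
  rw [natDegree_hermite]
  refine le_trans (norm_sum_le _ _) (le_of_eq (Finset.sum_congr rfl ?_))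
  intro k _
  rw [zsmul_eq_mul, norm_mul, norm_pow]
  congr 1
  rw [Complex.norm_intCast]

-- Step B
lemma aux_term (n k : ℕ) (hk : k ∈ range (n+1)) (x r : ℝ) (hx : 0 ≤ x) (hr : 0 ≤ r) :
    |((hermite n).coeff k : ℝ)| * x ^ k * r ^ n ≤
      (n ! : ℝ) * ((x*r)^k / k !) * ((r^2/2)^((n-k)/2) / ((n-k)/2)!) := by
  rw [mem_range] at hk
  have hkn : k ≤ n := by omega
  rcases Nat.even_or_odd (n + k) with he | ho
  · -- even case: equality
    have hnk : Even (n - k) := by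
      rw [Nat.even_sub hkn]; rwa [Nat.even_add] at he
    obtain ⟨l, hl⟩ := hnk
    have hln : n = k + 2*l := by omega
    have hdiv : (n - k)/2 = l := by omega
    rw [coeff_hermite_of_even_add he, hdiv]
    have hnk1 : n - k - 1 = 2*l - 1 := by omega
    rw [hnk1]
    push_cast
    rw [abs_mul, abs_mul, abs_pow, abs_neg, abs_one, one_pow, one_mul,
      abs_of_nonneg (by positivity : (0:ℝ) ≤ ((2*l-1)‼ : ℝ)),
      abs_of_nonneg (by positivity : (0:ℝ) ≤ (n.choose k : ℝ))]
    apply le_of_eq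
    have keym : ((2*l-1)‼ : ℝ) * (n.choose k : ℝ) * (2^l * l ! * k !) = (n ! : ℝ) := by
      exact_mod_cast aux_nat n k l hln
    have hrn : r ^ n = r ^ k * (r^2)^l := by
      rw [hln, pow_add, pow_mul]
    rw [hrn]
    have h1 : (k ! : ℝ) ≠ 0 := by positivity
    have h2 : (l ! : ℝ) ≠ 0 := by positivity
    rw [← keym, div_pow]
    field_simp
    ring
  · rw [coeff_hermite_of_odd_add ho]
    simp only [Int.cast_zero, abs_zero, zero_mul]
    positivity

-- Step C
lemma aux_sum (n : ℕ) (a b : ℝ) (ha : 0 ≤ a) (hb : 0 ≤ b) :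
    ∑ k ∈ range (n+1), (a^k / k !) * (b^((n-k)/2) / ((n-k)/2)!) ≤
      Real.exp a * Real.exp b := by
  have key : ∑ k ∈ range (n+1), (a^k / k !) * (b^((n-k)/2) / ((n-k)/2)!) ≤
      (∑ i ∈ range (n+1), a^i / i !) * (∑ j ∈ range (n+1), b^j / j !) := by
    rw [Finset.sum_mul_sum, ← Finset.sum_product']
    have himg : ∑ k ∈ range (n+1), (a^k / k !) * (b^((n-k)/2) / ((n-k)/2)!) =
        ∑ p ∈ (range (n+1)).image (fun k => (k, (n-k)/2)),
          (a^p.1 / p.1 !) * (b^p.2 / p.2 !) := by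
      rw [Finset.sum_image]
      intro u _ v _ h
      exact (Prod.mk.injEq _ _ _ _ ▸ h).1
    rw [himg]
    apply Finset.sum_le_sum_of_subset_of_nonneg
    · intro p hp
      simp only [mem_image, mem_range] at hp
      obtain ⟨k, hk, rfl⟩ := hp
      simp only [mem_product, mem_range]
      omega
    · intro p _ _
      positivity
  refine key.trans ?_
  have h1 := Real.sum_le_exp_of_nonneg ha (n+1)
  have h2 := Real.sum_le_exp_of_nonneg hb (n+1)
  apply mul_le_mul h1 h2 (Finset.sum_nonneg fun i _ => by positivity) (Real.exp_pos _).le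

/-- Complex Cramér-type inequality for probabilists' Hermite polynomials. -/
theorem stmt_4 (n : ℕ) (hn : 1 ≤ n) (z : ℂ) :
    ‖Polynomial.aeval z (Polynomial.hermite n)‖ ≤
      Real.exp (‖z‖ ^ 2 / 4) * (3 : ℝ) ^ ((n : ℝ) / 2) *
        Real.sqrt (n.factorial) * Real.exp (1 / 2) * (n : ℝ) ^ ((1 : ℝ) / 4) := by
  set x := ‖z‖ with hxdef
  have hx : 0 ≤ x := norm_nonneg _
  have hnpos : (0:ℝ) < n := by exact_mod_cast hn
  set r : ℝ := Real.sqrt ((n:ℝ)/3) with hrdef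
  have hrpos : 0 < r := Real.sqrt_pos.mpr (by positivity)
  have hr2 : r^2 = (n:ℝ)/3 := Real.sq_sqrt (by positivity)
  have hrn : r ^ n = ((n:ℝ)/3) ^ ((n:ℝ)/2) := by
    rw [hrdef, Real.sqrt_eq_rpow, ← Real.rpow_natCast (((n:ℝ)/3) ^ ((1:ℝ)/2)) n,
      ← Real.rpow_mul (by positivity)]
    congr 1
    ring
  -- main chain on |H| * r^n
  have chain : ‖aeval z (hermite n)‖ * r ^ n ≤
      (n ! : ℝ) * (Real.exp (x*r) * Real.exp (r^2/2)) := by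
    calc ‖aeval z (hermite n)‖ * r ^ n
        ≤ (∑ k ∈ range (n+1), |((hermite n).coeff k : ℝ)| * x ^ k) * r ^ n := by
          exact mul_le_mul_of_nonneg_right (aux_abs n z) (by positivity)
      _ = ∑ k ∈ range (n+1), |((hermite n).coeff k : ℝ)| * x ^ k * r ^ n := by
          rw [Finset.sum_mul]
      _ ≤ ∑ k ∈ range (n+1),
            (n ! : ℝ) * (((x*r)^k / k !) * (((r^2/2))^((n-k)/2) / ((n-k)/2)!)) := by
          apply Finset.sum_le_sum
          intro k hk
          have := aux_term n k hk x r hx hrpos.le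
          linarith [this]
      _ = (n ! : ℝ) * ∑ k ∈ range (n+1),
            ((x*r)^k / k !) * (((r^2/2))^((n-k)/2) / ((n-k)/2)!) := by
          rw [Finset.mul_sum]
      _ ≤ (n ! : ℝ) * (Real.exp (x*r) * Real.exp (r^2/2)) := by
          apply mul_le_mul_of_nonneg_left _ (by positivity)
          exact aux_sum n (x*r) (r^2/2) (by positivity) (by positivity)
  -- bound the exponentials
  have hexp : Real.exp (x*r) * Real.exp (r^2/2) ≤
      Real.exp (x^2/4) * Real.exp ((n:ℝ)/2) := by
    rw [← Real.exp_add, ← Real.exp_add, Real.exp_le_exp]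
    nlinarith [sq_nonneg (x - 2*r), hr2]
  have chain2 : ‖aeval z (hermite n)‖ * r ^ n ≤
      Real.exp (x^2/4) * ((n ! : ℝ) * Real.exp ((n:ℝ)/2)) := by
    refine chain.trans ?_
    calc (n ! : ℝ) * (Real.exp (x*r) * Real.exp (r^2/2))
        ≤ (n ! : ℝ) * (Real.exp (x^2/4) * Real.exp ((n:ℝ)/2)) :=
          mul_le_mul_of_nonneg_left hexp (by positivity)
      _ = Real.exp (x^2/4) * ((n ! : ℝ) * Real.exp ((n:ℝ)/2)) := by ring
  -- final algebra
  rw [← mul_le_mul_iff_of_pos_right (pow_pos hrpos n)]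
  refine chain2.trans ?_
  rw [hrn]
  have hkey := aux_key n hn
  have hpow : (3:ℝ) ^ ((n:ℝ)/2) * ((n:ℝ)/3) ^ ((n:ℝ)/2) = (n:ℝ) ^ ((n:ℝ)/2) := by
    rw [← Real.mul_rpow (by norm_num) (by positivity)]
    congr 1
    field_simp
  calc Real.exp (x^2/4) * ((n ! : ℝ) * Real.exp ((n:ℝ)/2))
      ≤ Real.exp (x^2/4) *
        (Real.sqrt (n !) * Real.exp (1/2) * (n:ℝ)^((1:ℝ)/4) * (n:ℝ)^((n:ℝ)/2)) :=
        mul_le_mul_of_nonneg_left hkey (by positivity)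
    _ = Real.exp (x^2/4) * ((3:ℝ) ^ ((n:ℝ)/2) * ((n:ℝ)/3) ^ ((n:ℝ)/2)) *
        Real.sqrt (n !) * Real.exp (1/2) * (n:ℝ)^((1:ℝ)/4) := by
        rw [hpow]; ring
    _ = Real.exp (x^2/4) * (3:ℝ) ^ ((n:ℝ)/2) * Real.sqrt (n !) * Real.exp (1/2) *
        (n:ℝ)^((1:ℝ)/4) * ((n:ℝ)/3) ^ ((n:ℝ)/2) := by ring
end

section
/- Let μ and ν be two finite signed measures on ℕ whose Fourier transforms satisfy μ̂(ξ) = e^{λ(e^{iξ}−1)}·ψ(ξ) and ν̂(ξ) = e^{λ(e^{iξ}−1)}·χ(ξ) with λ > 0, where ψ and χ are continuously differentiable functions on the torus. Then the total variation distance d_TV(μ,ν) = (1/2)·Σ_{n∈ℕ}|μ(n)−ν(n)| is at most ‖ψ−χ‖_∞/2 + (π/(2√3))·(‖ψ'−χ'‖_∞ + λ·‖ψ−χ‖_∞). -/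
open Complex Real MeasureTheory intervalIntegral

open Complex Real

private lemma ortho' (k : ℤ) : ∫ ξ in (0:ℝ)..(2*π), Complex.exp (k * ξ * I) = if k = 0 then (2*π:ℂ) else 0 := by
  have h : ∀ ξ : ℝ, Complex.exp (k * ξ * I) = Complex.exp ((k * I) * ξ) := by
    intro ξ; ring_nf
  simp_rw [h]
  rcases eq_or_ne k 0 with rfl | hk
  · simp
  · rw [integral_exp_mul_complex (by simp [hk, Complex.I_ne_zero])]
    have : Complex.exp ((k:ℂ)*I * (2*(π:ℂ))) = 1 := by
      rw [show ((k:ℂ)*I) * (2*(π:ℂ)) = (k:ℂ) * (2*π*I) by ring]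
      exact Complex.exp_int_mul_two_pi_mul_I k
    push_cast
    simp [this, hk]

private lemma coeff' (a : ℕ → ℂ) (f : ℝ → ℂ) (hs : Summable fun n => ‖a n‖)
    (hfs : ∀ ξ : ℝ, HasSum (fun n : ℕ => a n * Complex.exp (n * ξ * I)) (f ξ)) (m : ℕ) :
    ∫ ξ in (0:ℝ)..(2*π), f ξ * Complex.exp (-(m:ℂ) * ξ * I) = 2*π * a m := by
  have h2π : (0:ℝ) ≤ 2*π := by positivity
  set F : ℕ → ℝ → ℂ := fun n ξ => a n * Complex.exp (((n:ℤ) - m) * ξ * I) with hF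
  have hcont : ∀ n, Continuous (F n) := by
    intro n
    exact continuous_const.mul (Complex.continuous_exp.comp (by fun_prop))
  have hnorm : ∀ n ξ, ‖F n ξ‖ = ‖a n‖ := by
    intro n ξ
    rw [hF]
    simp only [norm_mul, Complex.norm_exp]
    have : (((((n:ℤ):ℂ)) - m) * ξ * I).re = 0 := by simp
    rw [this, Real.exp_zero, mul_one]
  have hint : ∀ n, Integrable (F n) (volume.restrict (Set.Ioc (0:ℝ) (2*π))) := by
    intro n; exact ((hcont n).integrableOn_Ioc).integrable
  have hsumint : Summable fun n => ∫ ξ in Set.Ioc (0:ℝ) (2*π), ‖F n ξ‖ := by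
    have : ∀ n, ∫ ξ in Set.Ioc (0:ℝ) (2*π), ‖F n ξ‖ = ‖a n‖ * (2*π) := by
      intro n
      simp_rw [hnorm n]
      rw [setIntegral_const]
      rw [measureReal_def, Real.volume_Ioc]
      rw [ENNReal.toReal_ofReal (by linarith), smul_eq_mul]
      ring
    simp_rw [this]
    exact hs.mul_right _
  have key := hasSum_integral_of_summable_integral_norm (μ := volume.restrict (Set.Ioc (0:ℝ) (2*π))) hint hsumint
  have hpt : ∀ ξ : ℝ, (∑' n, F n ξ) = f ξ * Complex.exp (-(m:ℂ) * ξ * I) := by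
    intro ξ
    have := ((hfs ξ).mul_right (Complex.exp (-(m:ℂ) * ξ * I))).tsum_eq
    rw [← this]
    congr 1 with n
    rw [hF]
    simp only []
    conv_rhs => rw [mul_assoc, ← Complex.exp_add]
    congr 2
    push_cast; ring
  have hFi : ∀ n, ∫ ξ in Set.Ioc (0:ℝ) (2*π), F n ξ = if n = m then 2*π*a m else 0 := by
    intro n
    have : ∫ ξ in Set.Ioc (0:ℝ) (2*π), F n ξ = ∫ ξ in (0:ℝ)..(2*π), F n ξ := by
      rw [intervalIntegral.integral_of_le h2π]
    rw [this, hF]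
    simp only []
    have ho := ortho' ((n:ℤ) - m)
    push_cast at ho ⊢
    rw [intervalIntegral.integral_const_mul, ho]
    rcases eq_or_ne n m with rfl | hn
    · simp [mul_comm]
    · have : (n:ℤ) - m ≠ 0 := by
        intro h; apply hn; omega
      simp [this, hn]
  simp_rw [hFi] at key
  simp_rw [hpt] at key
  have h2 : HasSum (fun n => if n = m then 2*π*a m else (0:ℂ)) (2*π*a m) := hasSum_ite_eq m _
  have := h2.unique key
  rw [intervalIntegral.integral_of_le h2π, ← this]

private lemma expd (c : ℂ) (x : ℝ) : HasDerivAt (fun ξ:ℝ => Complex.exp (c * ξ)) (c * Complex.exp (c * x)) x := by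
  have h1 : HasDerivAt (fun y:ℂ => Complex.exp (c * y)) (Complex.exp (c * x) * c) (x:ℂ) := by
    simpa using ((hasDerivAt_id (x:ℂ)).const_mul c).cexp
  simpa [mul_comm] using h1.comp_ofReal

private lemma expd' (c : ℂ) (x : ℝ) :
    HasDerivAt (fun ξ:ℝ => Complex.exp (c * ξ * I)) (c * I * Complex.exp (c * x * I)) x := by
  have := expd (c * I) x
  have h2 : ∀ ξ:ℝ, c * I * ξ = c * ξ * I := by intro ξ; ring
  simp_rw [h2] at this
  exact this

private lemma ibp' (f f' : ℝ → ℂ) (hd : ∀ ξ, HasDerivAt f (f' ξ) ξ) (hc : Continuous f')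
    (hper : f (2*π) = f 0) (m : ℕ) :
    ∫ ξ in (0:ℝ)..(2*π), f' ξ * Complex.exp (-(m:ℂ) * ξ * I)
      = (m * I) * ∫ ξ in (0:ℝ)..(2*π), f ξ * Complex.exp (-(m:ℂ) * ξ * I) := by
  have hcf : Continuous f := continuous_iff_continuousAt.mpr fun x => (hd x).continuousAt
  have hce : Continuous fun ξ:ℝ => Complex.exp (-(m:ℂ) * ξ * I) :=
    Complex.continuous_exp.comp (by fun_prop)
  set g : ℝ → ℂ := fun ξ => f ξ * Complex.exp (-(m:ℂ) * ξ * I) with hgdef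
  set G : ℝ → ℂ := fun ξ => f' ξ * Complex.exp (-(m:ℂ) * ξ * I)
    + f ξ * (-(m:ℂ) * I * Complex.exp (-(m:ℂ) * ξ * I)) with hGdef
  have hg : ∀ x : ℝ, HasDerivAt g (G x) x := fun x => (hd x).mul (expd' (-(m:ℂ)) x)
  have hGc : Continuous G := by
    apply Continuous.add
    · exact hc.mul hce
    · exact hcf.mul (continuous_const.mul hce)
  have key : ∫ x in (0:ℝ)..(2*π), G x = g (2*π) - g 0 :=
    integral_eq_sub_of_hasDerivAt (fun x _ => hg x) (hGc.intervalIntegrable _ _)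
  have hval : g (2*π) - g 0 = 0 := by
    rw [hgdef]
    simp only []
    have : Complex.exp (-(m:ℂ) * (2*π:ℝ) * I) = 1 := by
      rw [show -(m:ℂ) * (2*π:ℝ) * I = ((-(m:ℤ) : ℤ):ℂ) * (2*π*I) by push_cast; ring]
      exact Complex.exp_int_mul_two_pi_mul_I _
    rw [this, hper]
    simp
  rw [hval] at key
  have hsplit : ∫ x in (0:ℝ)..(2*π), G x
      = (∫ x in (0:ℝ)..(2*π), f' x * Complex.exp (-(m:ℂ) * x * I))
        + ∫ x in (0:ℝ)..(2*π), f x * (-(m:ℂ) * I * Complex.exp (-(m:ℂ) * x * I)) := by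
    rw [hGdef]
    exact integral_add ((hc.mul hce).intervalIntegrable _ _)
      ((hcf.mul (continuous_const.mul hce)).intervalIntegrable _ _)
  have hpull : ∫ x in (0:ℝ)..(2*π), f x * (-(m:ℂ) * I * Complex.exp (-(m:ℂ) * x * I))
      = (-(m:ℂ) * I) * ∫ x in (0:ℝ)..(2*π), f x * Complex.exp (-(m:ℂ) * x * I) := by
    rw [← intervalIntegral.integral_const_mul]
    congr 1 with x
    ring
  rw [hsplit, hpull] at key
  linear_combination key

private lemma parseval_bound' (D : ℝ → ℂ) (hper : Function.Periodic D (2*π)) (hcD : Continuous D)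
    (B : ℝ) (hB : ∀ ξ : ℝ, ‖D ξ‖ ≤ B) (b : ℤ → ℂ)
    (hb : ∀ n : ℤ, (2*(π:ℂ)) * b n = ∫ ξ in (0:ℝ)..(2*π), D ξ * Complex.exp (-(n:ℂ) * ξ * I)) :
    (Summable fun n : ℤ => ‖b n‖^2) ∧ ∑' n : ℤ, ‖b n‖^2 ≤ B^2 := by
  have hπ : (0:ℝ) < 2*π := by positivity
  have hπc : (π:ℂ) ≠ 0 := Complex.ofReal_ne_zero.mpr Real.pi_ne_zero
  haveI : Fact ((0:ℝ) < 2*π) := ⟨hπ⟩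
  set F : AddCircle (2*π) → ℂ := hper.lift with hFdef
  have hFc : Continuous F := continuous_coinduced_dom.mpr hcD
  have hFm : MemLp F 2 (AddCircle.haarAddCircle) :=
    MemLp.of_bound hFc.aestronglyMeasurable B (Filter.Eventually.of_forall (by
      intro x
      induction x using QuotientAddGroup.induction_on with
      | H ξ => simpa [hFdef, Function.Periodic.lift_coe] using hB ξ))
  set FL := hFm.toLp F with hFLdef
  have hae : (FL : AddCircle (2*π) → ℂ) =ᵐ[AddCircle.haarAddCircle] F := hFm.coeFn_toLp
  have hcoeff : ∀ n : ℤ, fourierCoeff (FL : AddCircle (2*π) → ℂ) n = b n := by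
    intro n
    have h1 : fourierCoeff (FL : AddCircle (2*π) → ℂ) n = fourierCoeff F n := by
      unfold fourierCoeff
      exact integral_congr_ae (hae.mono fun x hx => by dsimp only; rw [hx])
    rw [h1, fourierCoeff_eq_intervalIntegral F n 0]
    have h2 : ∀ ξ : ℝ, @fourier (2*π) (-n) (ξ : AddCircle (2*π)) • F (ξ : AddCircle (2*π))
        = D ξ * Complex.exp (-(n:ℂ) * ξ * I) := by
      intro ξ
      have hlift : F (ξ : AddCircle (2*π)) = D ξ := Function.Periodic.lift_coe hper ξ
      have harg : 2 * (π:ℂ) * I * ((-n : ℤ):ℂ) * (ξ:ℝ) / ((2 * π : ℝ):ℂ) = -(n:ℂ) * ξ * I := by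
        push_cast
        field_simp
      rw [smul_eq_mul, fourier_coe_apply, harg, hlift, mul_comm]
    rw [zero_add]
    simp_rw [h2]
    rw [← hb n, Complex.real_smul]
    push_cast
    field_simp
  have hpars := tsum_sq_fourierCoeff FL
  simp_rw [hcoeff] at hpars
  constructor
  · have hmem := lp.memℓp (fourierBasis.repr FL)
    have hsum := hmem.summable (by norm_num : (0:ℝ) < (2 : ENNReal).toReal)
    have heq : (fun i : ℤ => ‖b i‖^2) = fun i => ‖fourierBasis.repr FL i‖ ^ ((2:ENNReal).toReal) := by
      funext i
      rw [fourierBasis_repr, hcoeff]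
      norm_num
    rw [heq]
    exact hsum
  · rw [hpars]
    have hBnn : 0 ≤ B := le_trans (norm_nonneg (D 0)) (hB 0)
    have hle : ∀ᵐ t ∂(AddCircle.haarAddCircle), ‖(FL : AddCircle (2*π) → ℂ) t‖^2 ≤ B^2 := by
      filter_upwards [hae] with t ht
      rw [ht]
      have : ‖F t‖ ≤ B := by
        induction t using QuotientAddGroup.induction_on with
        | H ξ => simpa [hFdef, Function.Periodic.lift_coe] using hB ξ
      exact pow_le_pow_left₀ (norm_nonneg _) this 2
    calc ∫ t, ‖(FL : AddCircle (2*π) → ℂ) t‖^2 ∂(AddCircle.haarAddCircle)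
        ≤ ∫ _t, B^2 ∂(AddCircle.haarAddCircle) := by
          apply integral_mono_of_nonneg
          · exact Filter.Eventually.of_forall fun t => by positivity
          · exact integrable_const _
          · exact hle
      _ = B^2 := by simp

private lemma cs_tsum' (u v : ℕ → ℝ) (hu : ∀ n, 0 ≤ u n) (hv : ∀ n, 0 ≤ v n)
    (h2u : Summable fun n => u n ^ 2) (h2v : Summable fun n => v n ^ 2) :
    ∑' n, u n * v n ≤ Real.sqrt (∑' n, u n ^ 2) * Real.sqrt (∑' n, v n ^ 2) := by
  have hsummable : Summable fun n => u n * v n := by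
    apply Summable.of_nonneg_of_le (fun n => mul_nonneg (hu n) (hv n))
      (fun n => ?_) ((h2u.add h2v).mul_left (1/2))
    have := sq_nonneg (u n - v n)
    nlinarith
  apply hsummable.tsum_le_of_sum_le
  intro s
  have h1 : (∑ i ∈ s, u i * v i) ^ 2 ≤ (∑ i ∈ s, u i ^ 2) * ∑ i ∈ s, v i ^ 2 :=
    Finset.sum_mul_sq_le_sq_mul_sq s u v
  have h2 : (∑ i ∈ s, u i ^ 2) ≤ ∑' n, u n ^ 2 := h2u.sum_le_tsum s (fun i _ => sq_nonneg _)
  have h3 : (∑ i ∈ s, v i ^ 2) ≤ ∑' n, v n ^ 2 := h2v.sum_le_tsum s (fun i _ => sq_nonneg _)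
  have h4 : (0:ℝ) ≤ ∑ i ∈ s, u i * v i := Finset.sum_nonneg fun i _ => mul_nonneg (hu i) (hv i)
  have h6 : (0:ℝ) ≤ ∑' n, u n ^ 2 := tsum_nonneg fun n => sq_nonneg _
  rw [← Real.sqrt_sq h4, ← Real.sqrt_mul h6]
  apply Real.sqrt_le_sqrt
  calc (∑ i ∈ s, u i * v i) ^ 2 ≤ (∑ i ∈ s, u i ^ 2) * ∑ i ∈ s, v i ^ 2 := h1
    _ ≤ (∑' n, u n ^ 2) * ∑' n, v n ^ 2 :=
        mul_le_mul h2 h3 (Finset.sum_nonneg fun i _ => sq_nonneg _) h6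

/-- Total variation distance between two signed measures on ℕ whose Fourier
transforms factor through `exp (λ (e^{iξ} - 1))`. -/
theorem stmt_5 (μ ν : ℕ → ℝ) (lam : ℝ) (hlam : 0 < lam)
    (ψ χ ψ' χ' : ℝ → ℂ)
    (hψ : ∀ ξ : ℝ, HasDerivAt ψ (ψ' ξ) ξ) (hχ : ∀ ξ : ℝ, HasDerivAt χ (χ' ξ) ξ)
    (hψ'c : Continuous ψ') (hχ'c : Continuous χ')
    (hμ : ∀ ξ : ℝ, HasSum (fun n : ℕ => (μ n : ℂ) * Complex.exp (n * ξ * Complex.I))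
      (Complex.exp (lam * (Complex.exp (ξ * Complex.I) - 1)) * ψ ξ))
    (hν : ∀ ξ : ℝ, HasSum (fun n : ℕ => (ν n : ℂ) * Complex.exp (n * ξ * Complex.I))
      (Complex.exp (lam * (Complex.exp (ξ * Complex.I) - 1)) * χ ξ))
    (hsum : Summable (fun n : ℕ => |μ n - ν n|))
    (hsum2 : Summable (fun n : ℕ => ((n : ℝ) * |μ n - ν n|) ^ 2)) :
    (1 / 2) * ∑' n : ℕ, |μ n - ν n| ≤
      (⨆ ξ : ℝ, ‖ψ ξ - χ ξ‖) / 2 +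
        (Real.pi / (2 * Real.sqrt 3)) *
          ((⨆ ξ : ℝ, ‖ψ' ξ - χ' ξ‖) +
            lam * (⨆ ξ : ℝ, ‖ψ ξ - χ ξ‖)) := by
  have hπ : (0:ℝ) < π := Real.pi_pos
  have hπc : (π:ℂ) ≠ 0 := Complex.ofReal_ne_zero.mpr Real.pi_ne_zero
  set a : ℕ → ℝ := fun n => μ n - ν n with ha
  set E : ℝ → ℂ := fun ξ => Complex.exp (lam * (Complex.exp (ξ*I) - 1)) with hEdef
  set f : ℝ → ℂ := fun ξ => E ξ * (ψ ξ - χ ξ) with hfdef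
  have hfs : ∀ ξ : ℝ, HasSum (fun n : ℕ => ((a n : ℝ):ℂ) * Complex.exp (n*ξ*I)) (f ξ) := by
    intro ξ
    have h := (hμ ξ).sub (hν ξ)
    have h2 : (fun n:ℕ => (μ n:ℂ) * Complex.exp (n*ξ*I) - (ν n:ℂ)*Complex.exp (n*ξ*I))
        = fun n:ℕ => ((a n:ℝ):ℂ) * Complex.exp (n*ξ*I) := by
      funext n; rw [ha]; push_cast; ring
    rw [h2] at h
    simpa [hfdef, hEdef, mul_sub] using h
  have hsum' : Summable fun n => ‖((a n:ℝ):ℂ)‖ := by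
    simpa [Complex.norm_real, Real.norm_eq_abs] using hsum
  have hexp_per : ∀ ξ:ℝ, Complex.exp ((↑(ξ+2*π)) * I) = Complex.exp ((ξ:ℂ) * I) := by
    intro ξ
    rw [show ((↑(ξ+2*π):ℂ)) * I = ↑ξ*I + ((1:ℤ):ℂ)*(2*π*I) by push_cast; ring,
      Complex.exp_add, Complex.exp_int_mul_two_pi_mul_I, mul_one]
  have hexp_per_nat : ∀ (n:ℕ) (ξ:ℝ), Complex.exp ((n:ℂ)*(↑(ξ+2*π))*I) = Complex.exp ((n:ℂ)*↑ξ*I) := by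
    intro n ξ
    rw [show (n:ℂ)*(↑(ξ+2*π))*I = (n:ℂ)*↑ξ*I + ((n:ℤ):ℂ)*(2*π*I) by push_cast; ring,
      Complex.exp_add, Complex.exp_int_mul_two_pi_mul_I, mul_one]
  have hf_per : Function.Periodic f (2*π) := by
    intro ξ
    have h1 := hfs (ξ + 2*π)
    have h2 : (fun n:ℕ => ((a n:ℝ):ℂ) * Complex.exp (n*(↑(ξ+2*π))*I))
        = fun n:ℕ => ((a n:ℝ):ℂ) * Complex.exp (n*(ξ:ℂ)*I) := by
      funext n; rw [hexp_per_nat]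
    rw [h2] at h1
    exact h1.unique (hfs ξ)
  -- derivative
  have hexpd : ∀ x:ℝ, HasDerivAt (fun ξ:ℝ => Complex.exp (↑ξ*I)) (I * Complex.exp (↑x*I)) x := by
    intro x
    simpa using expd' 1 x
  have hEd : ∀ x:ℝ, HasDerivAt E (E x * ((lam:ℂ) * (I * Complex.exp (↑x*I)))) x := by
    intro x
    have h1 : HasDerivAt (fun ξ:ℝ => (lam:ℂ) * (Complex.exp (↑ξ*I) - 1))
        ((lam:ℂ) * (I * Complex.exp (↑x*I))) x := ((hexpd x).sub_const 1).const_mul _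
    exact h1.cexp
  set D : ℝ → ℂ := fun x => E x * ((lam:ℂ) * (I * Complex.exp (↑x*I))) * (ψ x - χ x)
    + E x * (ψ' x - χ' x) with hDdef
  have hfd : ∀ x, HasDerivAt f (D x) x := by
    intro x
    have h := (hEd x).mul ((hψ x).sub (hχ x))
    exact h
  -- continuity
  have hψcont : Continuous ψ := continuous_iff_continuousAt.mpr fun x => (hψ x).continuousAt
  have hχcont : Continuous χ := continuous_iff_continuousAt.mpr fun x => (hχ x).continuousAt
  have hgc : Continuous (fun ξ => ψ ξ - χ ξ) := hψcont.sub hχcont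
  have hg'c : Continuous (fun ξ => ψ' ξ - χ' ξ) := hψ'c.sub hχ'c
  have hec : Continuous (fun ξ:ℝ => Complex.exp (↑ξ*I)) :=
    Complex.continuous_exp.comp (Complex.continuous_ofReal.mul continuous_const)
  have hEc : Continuous E := by
    rw [hEdef]
    exact Complex.continuous_exp.comp (continuous_const.mul (hec.sub continuous_const))
  have hDc : Continuous D := by
    rw [hDdef]
    exact ((hEc.mul (continuous_const.mul (continuous_const.mul hec))).mul hgc).add
      (hEc.mul hg'c)
  have hD_per : Function.Periodic D (2*π) := by
    intro ξ
    have h1 : HasDerivAt (fun t => f (t + 2*π)) (D (ξ+2*π)) ξ :=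
      HasDerivAt.comp_add_const ξ (2*π) (hfd (ξ+2*π))
    have h2 : (fun t => f (t + 2*π)) = f := funext fun t => hf_per t
    rw [h2] at h1
    exact h1.unique (hfd ξ)
  have hEper : ∀ ξ:ℝ, E (ξ + 2*π) = E ξ := by
    intro ξ
    rw [hEdef]
    simp only []
    rw [hexp_per ξ]
  have hEne : ∀ ξ:ℝ, E ξ ≠ 0 := by
    intro ξ; rw [hEdef]; exact Complex.exp_ne_zero _
  have hg_per : ∀ ξ:ℝ, ψ (ξ+2*π) - χ (ξ+2*π) = ψ ξ - χ ξ := by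
    intro ξ
    have h1 : E (ξ+2*π) * (ψ (ξ+2*π) - χ (ξ+2*π)) = E ξ * (ψ ξ - χ ξ) := hf_per ξ
    rw [hEper ξ] at h1
    exact mul_left_cancel₀ (hEne ξ) h1
  have hg'_per : ∀ ξ:ℝ, ψ' (ξ+2*π) - χ' (ξ+2*π) = ψ' ξ - χ' ξ := by
    intro ξ
    have h1 := hD_per ξ
    rw [hDdef] at h1
    simp only [] at h1
    rw [hEper ξ, hg_per ξ, hexp_per ξ] at h1
    have h2 := add_left_cancel h1
    exact mul_left_cancel₀ (hEne ξ) h2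
  -- sups
  have hbddM : BddAbove (Set.range fun ξ:ℝ => ‖ψ ξ - χ ξ‖) := by
    have hper : Function.Periodic (fun ξ:ℝ => ‖ψ ξ - χ ξ‖) (2*π) := by
      intro ξ; simp only []; rw [hg_per ξ]
    rw [← hper.image_Icc (by positivity) 0]
    exact ((isCompact_Icc).image (continuous_norm.comp hgc)).bddAbove
  have hbddM' : BddAbove (Set.range fun ξ:ℝ => ‖ψ' ξ - χ' ξ‖) := by
    have hper : Function.Periodic (fun ξ:ℝ => ‖ψ' ξ - χ' ξ‖) (2*π) := by
      intro ξ; simp only []; rw [hg'_per ξ]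
    rw [← hper.image_Icc (by positivity) 0]
    exact ((isCompact_Icc).image (continuous_norm.comp hg'c)).bddAbove
  set M : ℝ := ⨆ ξ : ℝ, ‖ψ ξ - χ ξ‖ with hM
  set M' : ℝ := ⨆ ξ : ℝ, ‖ψ' ξ - χ' ξ‖ with hM'
  have hMle : ∀ ξ, ‖ψ ξ - χ ξ‖ ≤ M := fun ξ => le_ciSup hbddM ξ
  have hM'le : ∀ ξ, ‖ψ' ξ - χ' ξ‖ ≤ M' := fun ξ => le_ciSup hbddM' ξ
  have hM0 : 0 ≤ M := le_trans (norm_nonneg _) (hMle 0)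
  have hM'0 : 0 ≤ M' := le_trans (norm_nonneg _) (hM'le 0)
  -- bounds
  have hEabs : ∀ ξ:ℝ, ‖E ξ‖ ≤ 1 := by
    intro ξ
    rw [hEdef]
    simp only []
    rw [Complex.norm_exp, Real.exp_le_one_iff]
    have hre : ((lam:ℂ) * (Complex.exp (↑ξ*I) - 1)).re = lam * (Real.cos ξ - 1) := by
      simp [Complex.mul_re, Complex.exp_ofReal_mul_I_re]
    rw [hre]
    nlinarith [Real.cos_le_one ξ, hlam.le]
  have hfabs : ∀ ξ, ‖f ξ‖ ≤ M := by
    intro ξ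
    rw [hfdef]
    simp only []
    rw [norm_mul]
    calc ‖E ξ‖ * ‖ψ ξ - χ ξ‖ ≤ 1 * M :=
          mul_le_mul (hEabs ξ) (hMle ξ) (norm_nonneg _) zero_le_one
      _ = M := one_mul M
  set B : ℝ := M' + lam * M with hB
  have hB0 : 0 ≤ B := add_nonneg hM'0 (mul_nonneg hlam.le hM0)
  have hDabs : ∀ ξ, ‖D ξ‖ ≤ B := by
    intro ξ
    rw [hDdef]
    simp only []
    calc ‖E ξ * ((lam:ℂ)*(I*Complex.exp (↑ξ*I))) * (ψ ξ - χ ξ) + E ξ * (ψ' ξ - χ' ξ)‖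
        ≤ ‖E ξ * ((lam:ℂ)*(I*Complex.exp (↑ξ*I))) * (ψ ξ - χ ξ)‖ + ‖E ξ * (ψ' ξ - χ' ξ)‖ :=
          norm_add_le _ _
      _ ≤ lam * M + M' := by
          apply add_le_add
          · have habs : ‖E ξ * ((lam:ℂ)*(I*Complex.exp (↑ξ*I))) * (ψ ξ - χ ξ)‖
                = ‖E ξ‖ * (lam * ‖ψ ξ - χ ξ‖) := by
              rw [norm_mul, norm_mul, norm_mul, norm_mul, Complex.norm_I,
                Complex.norm_exp_ofReal_mul_I, Complex.norm_real, Real.norm_eq_abs, abs_of_pos hlam]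
              ring
            rw [habs]
            calc ‖E ξ‖ * (lam * ‖ψ ξ - χ ξ‖) ≤ 1 * (lam * M) := by
                  apply mul_le_mul (hEabs ξ)
                    (mul_le_mul_of_nonneg_left (hMle ξ) hlam.le)
                    (by positivity) zero_le_one
              _ = lam * M := one_mul _
          · rw [norm_mul]
            calc ‖E ξ‖ * ‖ψ' ξ - χ' ξ‖ ≤ 1 * M' :=
                  mul_le_mul (hEabs ξ) (hM'le ξ) (norm_nonneg _) zero_le_one
              _ = M' := one_mul _
      _ = B := by rw [hB]; ring
  -- Fourier coefficients of f
  have hcoef : ∀ m:ℕ, ∫ ξ in (0:ℝ)..(2*π), f ξ * Complex.exp (-(m:ℂ)*↑ξ*I)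
      = 2*π*((a m:ℝ):ℂ) := fun m => coeff' _ f hsum' hfs m
  have ha0 : |a 0| ≤ M := by
    have h0 := hcoef 0
    have h0' : ∫ ξ in (0:ℝ)..(2*π), f ξ * Complex.exp (-((0:ℕ):ℂ)*↑ξ*I) = (((2*π*(a 0)):ℝ):ℂ) := by
      rw [h0]; push_cast; ring
    have hbound : ‖∫ ξ in (0:ℝ)..(2*π), f ξ * Complex.exp (-((0:ℕ):ℂ)*↑ξ*I)‖ ≤ M * |2*π - 0| := by
      apply intervalIntegral.norm_integral_le_of_norm_le_const
      intro x hx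
      have h1 : Complex.exp (-((0:ℕ):ℂ)*↑x*I) = 1 := by norm_num
      rw [h1, mul_one]
      exact hfabs x
    rw [h0'] at hbound
    rw [Complex.norm_real, Real.norm_eq_abs, abs_mul,
      abs_of_pos (by positivity : (0:ℝ) < 2*π)] at hbound
    have h2 : |2*π - 0| = 2*π := by
      rw [sub_zero]; exact abs_of_pos (by positivity)
    rw [h2] at hbound
    nlinarith [hπ]
  -- coefficients of D (the derivative)
  set c : ℤ → ℂ := fun n => (1/(2*(π:ℂ))) * ∫ ξ in (0:ℝ)..(2*π), D ξ * Complex.exp (-(n:ℂ)*↑ξ*I)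
    with hc
  have h2πc : (2*(π:ℂ)) ≠ 0 := mul_ne_zero two_ne_zero hπc
  have hbpair : ∀ n:ℤ, (2*(π:ℂ)) * c n = ∫ ξ in (0:ℝ)..(2*π), D ξ * Complex.exp (-(n:ℂ)*↑ξ*I) := by
    intro n
    rw [hc]
    simp only []
    rw [← mul_assoc, mul_one_div, div_self h2πc, one_mul]
  obtain ⟨hcsum, hcbound⟩ := parseval_bound' D hD_per hDc B hDabs c hbpair
  have hcm : ∀ m:ℕ, c (m:ℤ) = (m:ℂ) * I * ((a m:ℝ):ℂ) := by
    intro m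
    have hper0 : f (2*π) = f 0 := by
      have := hf_per 0; rwa [zero_add] at this
    have h1 := ibp' f D hfd hDc hper0 m
    rw [hc]
    simp only [Int.cast_natCast]
    rw [h1, hcoef m]
    field_simp
  have hsum2' : Summable fun n:ℕ => ((n:ℝ)*|a n|)^2 := hsum2
  have hterm : ∀ m:ℕ, ((m:ℝ)*|a m|)^2 = ‖c (m:ℤ)‖^2 := by
    intro m
    rw [hcm m]
    simp [norm_mul, Complex.norm_I, Complex.norm_natCast, Complex.norm_real]
  have hNsum : ∑' n:ℕ, ((n:ℝ)*|a n|)^2 ≤ B^2 := by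
    refine le_trans (hsum2'.tsum_le_tsum_of_inj (fun n:ℕ => (n:ℤ))
      (Nat.cast_injective) (fun cz _ => by positivity)
      (fun n => le_of_eq (hterm n)) hcsum) hcbound
  -- Cauchy-Schwarz on the tail
  have key2 : ∑' n:ℕ, |a (n+1)| ≤ (π / Real.sqrt 3) * B := by
    have hzeta := hasSum_zeta_two
    have hu : Summable fun n:ℕ => (1/((n:ℝ)+1))^2 := by
      have h2 := hzeta.summable.comp_injective Nat.succ_injective
      exact h2.congr fun n => by
        simp only [Function.comp]
        rw [Nat.cast_succ, div_pow, one_pow]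
    have husum : ∑' n:ℕ, (1/((n:ℝ)+1))^2 = π^2/6 := by
      have h0 := hzeta.tsum_eq
      rw [hzeta.summable.tsum_eq_zero_add] at h0
      norm_num at h0
      rw [← h0]
      exact tsum_congr fun n => by
        rw [div_pow, one_pow, one_div]
    have hv2 : Summable fun n:ℕ => (((n:ℝ)+1)*|a (n+1)|)^2 := by
      have h2 := hsum2'.comp_injective Nat.succ_injective
      exact h2.congr fun n => by
        simp only [Function.comp]
        push_cast
        ring
    have hv2sum : ∑' n:ℕ, (((n:ℝ)+1)*|a (n+1)|)^2 ≤ B^2 := by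
      have h0 : ∑' n:ℕ, ((n:ℝ)*|a n|)^2
          = ((0:ℕ):ℝ)*|a 0|^2*0 + ∑' n:ℕ, (((n+1:ℕ):ℝ)*|a (n+1)|)^2 := by
        rw [hsum2'.tsum_eq_zero_add]
        norm_num
      have heq : ∑' n:ℕ, (((n:ℝ)+1)*|a (n+1)|)^2 = ∑' n:ℕ, ((n:ℝ)*|a n|)^2 := by
        rw [h0]
        simp only [zero_add, Nat.cast_zero, zero_mul, mul_zero]
        exact tsum_congr fun n => by push_cast; ring
      rw [heq]
      exact hNsum
    have hcs := cs_tsum' (fun n => 1/((n:ℝ)+1)) (fun n => ((n:ℝ)+1)*|a (n+1)|)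
      (fun n => by positivity) (fun n => by positivity) hu hv2
    have hlhs : ∑' n:ℕ, (1/((n:ℝ)+1)) * (((n:ℝ)+1)*|a (n+1)|) = ∑' n:ℕ, |a (n+1)| :=
      tsum_congr fun n => by
        have : ((n:ℝ)+1) ≠ 0 := by positivity
        field_simp
    rw [hlhs, husum] at hcs
    have hs1 : Real.sqrt (π^2/6) ≤ π / Real.sqrt 3 := by
      have h7 : π / Real.sqrt 3 = Real.sqrt (π^2/3) := by
        rw [Real.sqrt_div (sq_nonneg π), Real.sqrt_sq Real.pi_pos.le]
      rw [h7]
      apply Real.sqrt_le_sqrt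
      nlinarith [sq_nonneg π]
    have hs2 : Real.sqrt (∑' n:ℕ, (((n:ℝ)+1)*|a (n+1)|)^2) ≤ B := by
      rw [show B = Real.sqrt (B^2) from (Real.sqrt_sq hB0).symm]
      exact Real.sqrt_le_sqrt hv2sum
    calc ∑' n:ℕ, |a (n+1)| ≤ Real.sqrt (π^2/6) * Real.sqrt (∑' n:ℕ, (((n:ℝ)+1)*|a (n+1)|)^2) := hcs
      _ ≤ (π / Real.sqrt 3) * B :=
          mul_le_mul hs1 hs2 (Real.sqrt_nonneg _) (by positivity)
  -- conclude
  have hsumA : Summable fun n:ℕ => |a n| := hsum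
  have hsplit : ∑' n:ℕ, |a n| = |a 0| + ∑' n:ℕ, |a (n+1)| := hsumA.tsum_eq_zero_add
  show (1 / 2) * ∑' n : ℕ, |a n| ≤ M / 2 + (π / (2 * Real.sqrt 3)) * B
  rw [hsplit]
  have h7 : π/(2*Real.sqrt 3)*B = ((π/Real.sqrt 3)*B)/2 := by ring
  rw [h7]
  linarith [ha0, key2]
end

section
/- Let θ > 0, ρ > 1, and let w be a complex number with |w| ≤ ρ. If n ≥ 2θρ + 1, then |Γ(n + θw)/n! − n^{θw−1}| ≤ B·n^{θ·Re(w)−2}, where B = 3·(θρ + 1/2)²·e^{(3/2)(θρ + 1/2)}. -/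
open Complex Filter Finset Topology

namespace Stmt14Aux

variable {n : ℕ} {a : ℂ}

/-- the summand -/
noncomputable def u (n : ℕ) (a : ℂ) (j : ℕ) : ℂ :=
  a * ((Real.log ((n:ℝ) + j + 1) - Real.log ((n:ℝ) + j) : ℝ) : ℂ)
    - Complex.log (1 + a / ((n:ℂ) + j))

lemma npos (hn2 : 2 ≤ n) (j : ℕ) : (0:ℝ) < (n:ℝ) + j := by
  have : (2:ℝ) ≤ (n:ℝ) := by exact_mod_cast hn2
  positivity

lemma abs_v_le (hn2 : 2 ≤ n) (ha : ‖a‖ ≤ ((n:ℝ)-1)/2) (j : ℕ) :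
    ‖a / ((n:ℂ) + j)‖ ≤ ((n:ℝ)-1)/(2*((n:ℝ)+j)) := by
  have h1 : (0:ℝ) < (n:ℝ) + j := npos hn2 j
  have h2 : ‖(n:ℂ) + j‖ = (n:ℝ) + j := by
    rw [show ((n:ℂ) + j) = (((n:ℝ) + j : ℝ) : ℂ) by push_cast; ring]
    rw [Complex.norm_real, Real.norm_eq_abs, abs_of_pos h1]
  rw [norm_div, h2]
  rw [div_le_div_iff₀ h1 (by positivity)]
  calc ‖a‖ * (2*((n:ℝ)+j)) ≤ (((n:ℝ)-1)/2) * (2*((n:ℝ)+j)) :=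
        mul_le_mul_of_nonneg_right ha (by positivity)
    _ = ((n:ℝ)-1) * ((n:ℝ)+j) := by ring

lemma abs_v_lt_half (hn2 : 2 ≤ n) (ha : ‖a‖ ≤ ((n:ℝ)-1)/2) (j : ℕ) :
    ‖a / ((n:ℂ) + j)‖ < 1/2 := by
  refine lt_of_le_of_lt (abs_v_le hn2 ha j) ?_
  have h1 : (0:ℝ) < (n:ℝ) + j := npos hn2 j
  rw [div_lt_div_iff₀ (by positivity) (by norm_num)]
  nlinarith [Nat.cast_nonneg (α := ℝ) j]

lemma u_bound (hn2 : 2 ≤ n) (ha : ‖a‖ ≤ ((n:ℝ)-1)/2) (j : ℕ) :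
    ‖u n a j‖ ≤ (‖a‖ + ‖a‖ ^ 2) * (1/((n:ℝ)+j)^2) := by
  have h1 : (0:ℝ) < (n:ℝ) + j := npos hn2 j
  have h2 : (2:ℝ) ≤ (n:ℝ) + j := by
    have : (2:ℝ) ≤ (n:ℝ) := by exact_mod_cast hn2
    have := Nat.cast_nonneg (α := ℝ) j
    linarith
  set w : ℝ := 1/((n:ℝ)+j) with hw
  have hw0 : 0 < w := by positivity
  have hwhalf : w ≤ 1/2 := by
    rw [hw, div_le_div_iff₀ h1 (by norm_num)]; linarith
  set v : ℂ := a / ((n:ℂ) + j) with hv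
  have hvW : a * ((w:ℝ):ℂ) = v := by
    rw [hv, hw]
    push_cast
    rw [mul_one_div]
  -- rewrite the real log difference
  have hlog : Real.log ((n:ℝ) + j + 1) - Real.log ((n:ℝ) + j) = Real.log (1 + w) := by
    rw [hw]
    rw [show (1:ℝ) + 1/((n:ℝ)+j) = ((n:ℝ)+j+1)/((n:ℝ)+j) by field_simp]
    rw [Real.log_div (ne_of_gt (by linarith)) (ne_of_gt (by linarith))]
  have hclog : ((Real.log (1 + w) : ℝ) : ℂ) = Complex.log (1 + ((w:ℝ):ℂ)) := by
    rw [Complex.ofReal_log (by linarith : (0:ℝ) ≤ 1 + w)]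
    congr 1
    push_cast
    ring
  have hu : u n a j = a * (Complex.log (1 + ((w:ℝ):ℂ)) - ((w:ℝ):ℂ))
      - (Complex.log (1 + v) - v) := by
    rw [u, hlog, hclog, ← hvW, hw]
    push_cast
    ring
  have habsW : ‖((w:ℝ):ℂ)‖ = w := by
    rw [Complex.norm_real, Real.norm_eq_abs, abs_of_pos hw0]
  have hWlt : ‖((w:ℝ):ℂ)‖ < 1 := by
    rw [habsW]; linarith
  have hvhalf : ‖v‖ ≤ 1/2 := (abs_v_lt_half hn2 ha j).le
  have hvlt : ‖v‖ < 1 := by linarith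
  have b1 : ‖Complex.log (1 + ((w:ℝ):ℂ)) - ((w:ℝ):ℂ)‖ ≤ w^2 := by
    refine le_trans (Complex.norm_log_one_add_sub_self_le hWlt) ?_
    rw [habsW]
    have : (1 - w)⁻¹ ≤ 2 := by
      rw [inv_le_comm₀ (by linarith) (by norm_num)]; linarith
    nlinarith
  have b2 : ‖Complex.log (1 + v) - v‖ ≤ ‖v‖ ^ 2 := by
    refine le_trans (Complex.norm_log_one_add_sub_self_le hvlt) ?_
    have : (1 - ‖v‖)⁻¹ ≤ 2 := by
      rw [inv_le_comm₀ (by linarith) (by norm_num)]; linarith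
    nlinarith
  have habsv : ‖v‖ = ‖a‖ * w := by
    rw [hv, norm_div, hw]
    have h2' : ‖(n:ℂ) + j‖ = (n:ℝ) + j := by
      rw [show ((n:ℂ) + j) = (((n:ℝ) + j : ℝ) : ℂ) by push_cast; ring]
      rw [Complex.norm_real, Real.norm_eq_abs, abs_of_pos h1]
    rw [h2', mul_one_div]
  calc ‖u n a j‖
      ≤ ‖a * (Complex.log (1 + ((w:ℝ):ℂ)) - ((w:ℝ):ℂ))‖
        + ‖Complex.log (1 + v) - v‖ := by
        rw [hu]
        simpa using norm_sub_le (a * (Complex.log (1 + ((w:ℝ):ℂ)) - ((w:ℝ):ℂ)))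
          (Complex.log (1 + v) - v)
    _ ≤ ‖a‖ * w^2 + (‖a‖ * w)^2 := by
        rw [norm_mul]
        gcongr
        · rw [← habsv]; exact b2
    _ = (‖a‖ + ‖a‖ ^ 2) * (1/((n:ℝ)+j)^2) := by
        rw [hw]; field_simp

lemma summable_inv_sq (hn2 : 2 ≤ n) : Summable (fun j : ℕ => 1/((n:ℝ)+j)^2) := by
  have h1 : Summable (fun j : ℕ => 1/((j:ℝ)+1)^2) := by
    have := (summable_nat_add_iff (f := fun j : ℕ => 1/(j:ℝ)^2) 1).mpr
      ((Real.summable_one_div_nat_pow (p := 2)).mpr one_lt_two)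
    refine this.congr fun j => ?_
    push_cast
    ring
  refine Summable.of_nonneg_of_le (fun j => by positivity) (fun j => ?_) h1
  have hn : (1:ℝ) ≤ (n:ℝ) := by
    have : (2:ℝ) ≤ (n:ℝ) := by exact_mod_cast hn2
    linarith
  have hj : (0:ℝ) ≤ (j:ℝ) := Nat.cast_nonneg j
  apply one_div_le_one_div_of_le
  · positivity
  · nlinarith

lemma tsum_inv_sq_le (hn2 : 2 ≤ n) : ∑' j : ℕ, 1/((n:ℝ)+j)^2 ≤ 1/((n:ℝ)-1) := by
  have hn : (2:ℝ) ≤ (n:ℝ) := by exact_mod_cast hn2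
  refine Summable.tsum_le_of_sum_range_le (summable_inv_sq hn2) (fun m => ?_)
  have telesc := Finset.sum_range_sub' (fun j : ℕ => 1/((n:ℝ)-1+j)) m
  calc ∑ j ∈ range m, 1/((n:ℝ)+j)^2
      ≤ ∑ j ∈ range m, (1/((n:ℝ)-1+(j:ℕ)) - 1/((n:ℝ)-1+((j+1:ℕ)))) := by
        apply Finset.sum_le_sum
        intro j _
        have hj : (0:ℝ) ≤ (j:ℝ) := Nat.cast_nonneg j
        have e1 : ((n:ℝ)-1+((j+1:ℕ):ℝ)) = (n:ℝ)+j := by push_cast; ring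
        rw [e1]
        have h2 : (0:ℝ) < (n:ℝ)-1+j := by linarith
        have h3 : (0:ℝ) < (n:ℝ)+j := by linarith
        have heq : 1/((n:ℝ)-1+j) - 1/((n:ℝ)+j) = 1/(((n:ℝ)-1+j)*((n:ℝ)+j)) := by
          rw [div_sub_div _ _ (ne_of_gt h2) (ne_of_gt h3),
            show (1*((n:ℝ)+j) - ((n:ℝ)-1+j)*1) = 1 by ring]
        rw [heq]
        apply one_div_le_one_div_of_le
        · nlinarith
        · nlinarith
    _ = 1/((n:ℝ)-1+((0:ℕ):ℝ)) - 1/((n:ℝ)-1+(m:ℝ)) := telesc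
    _ ≤ 1/((n:ℝ)-1) := by
        have hm : (0:ℝ) ≤ (m:ℝ) := Nat.cast_nonneg m
        have h0 : 0 ≤ 1/((n:ℝ)-1+(m:ℝ)) := le_of_lt (div_pos one_pos (by linarith))
        simp only [Nat.cast_zero, add_zero]
        linarith

lemma summable_norm_u (hn2 : 2 ≤ n) (ha : ‖a‖ ≤ ((n:ℝ)-1)/2) :
    Summable (fun j : ℕ => ‖u n a j‖) := by
  refine Summable.of_nonneg_of_le (fun j => norm_nonneg _) (u_bound hn2 ha)
    (((summable_inv_sq hn2)).mul_left _)

lemma summable_u (hn2 : 2 ≤ n) (ha : ‖a‖ ≤ ((n:ℝ)-1)/2) :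
    Summable (fun j : ℕ => u n a j) := by
  rw [← summable_norm_iff (E := ℂ)]
  exact summable_norm_u hn2 ha

lemma abs_tsum_u_le (hn2 : 2 ≤ n) (ha : ‖a‖ ≤ ((n:ℝ)-1)/2) :
    ‖∑' j : ℕ, u n a j‖
      ≤ (‖a‖ + ‖a‖ ^ 2) / ((n:ℝ)-1) := by
  have hC : 0 ≤ ‖a‖ + ‖a‖ ^ 2 :=
    add_nonneg (norm_nonneg a) (sq_nonneg _)
  calc ‖∑' j : ℕ, u n a j‖ ≤ ∑' j : ℕ, ‖u n a j‖ := by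
        simpa using norm_tsum_le_tsum_norm (f := fun j : ℕ => u n a j)
          (by simpa using summable_norm_u hn2 ha)
    _ ≤ ∑' j : ℕ, (‖a‖ + ‖a‖ ^ 2) * (1/((n:ℝ)+j)^2) := by
        exact Summable.tsum_le_tsum (u_bound hn2 ha) (summable_norm_u hn2 ha)
          ((summable_inv_sq hn2).mul_left _)
    _ = (‖a‖ + ‖a‖ ^ 2) * ∑' j : ℕ, 1/((n:ℝ)+j)^2 := tsum_mul_left
    _ ≤ (‖a‖ + ‖a‖ ^ 2) * (1/((n:ℝ)-1)) := by
        exact mul_le_mul_of_nonneg_left (tsum_inv_sq_le hn2) hC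
    _ = (‖a‖ + ‖a‖ ^ 2) / ((n:ℝ)-1) := by ring

lemma Nj_ne (hn2 : 2 ≤ n) (j : ℕ) : ((n:ℂ) + j) ≠ 0 := by
  intro h
  have := congrArg Complex.re h
  simp only [Complex.add_re, Complex.natCast_re, Complex.zero_re] at this
  have := npos hn2 j
  linarith

lemma NA_ne (hn2 : 2 ≤ n) (ha : ‖a‖ ≤ ((n:ℝ)-1)/2) (j : ℕ) :
    ((n:ℂ) + a + j) ≠ 0 := by
  intro h
  have hre := congrArg Complex.re h
  simp only [Complex.add_re, Complex.natCast_re, Complex.zero_re] at hre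
  have h1 : |a.re| ≤ ‖a‖ := Complex.abs_re_le_norm a
  have h2 : (2:ℝ) ≤ (n:ℝ) := by exact_mod_cast hn2
  have h3 : (0:ℝ) ≤ (j:ℝ) := Nat.cast_nonneg j
  have := abs_le.mp h1
  linarith [this.1]

lemma one_add_v_ne (hn2 : 2 ≤ n) (ha : ‖a‖ ≤ ((n:ℝ)-1)/2) (j : ℕ) :
    (1 + a/((n:ℂ)+j)) ≠ 0 := by
  intro h
  have : a/((n:ℂ)+j) = -1 := by linear_combination h
  have h2 := abs_v_lt_half hn2 ha j
  rw [this] at h2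
  simp at h2
  linarith

lemma sum_u_eq (hn2 : 2 ≤ n) (m : ℕ) :
    ∑ j ∈ range (m+1), u n a j
      = a * ((Real.log ((n:ℝ)+(m+1)) - Real.log ((n:ℝ)) : ℝ) : ℂ)
        - ∑ j ∈ range (m+1), Complex.log (1 + a/((n:ℂ)+j)) := by
  have h1 : ∀ j ∈ range (m+1), u n a j
      = a * (((fun k : ℕ => Real.log ((n:ℝ)+k)) (j+1) - (fun k : ℕ => Real.log ((n:ℝ)+k)) j : ℝ) : ℂ)
        - Complex.log (1 + a/((n:ℂ)+j)) := by
    intro j _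
    simp only [u]
    congr 3
    push_cast
    ring
  rw [Finset.sum_congr rfl h1, Finset.sum_sub_distrib, ← Finset.mul_sum]
  congr 2
  rw [← Complex.ofReal_sum]
  congr 1
  rw [Finset.sum_range_sub (fun k : ℕ => Real.log ((n:ℝ)+k)) (m+1)]
  push_cast
  ring

lemma exp_sum_u (hn2 : 2 ≤ n) (ha : ‖a‖ ≤ ((n:ℝ)-1)/2) (m : ℕ) :
    Complex.exp (∑ j ∈ range (m+1), u n a j)
      = Complex.exp (a * ((Real.log ((n:ℝ)+(m+1)) - Real.log ((n:ℝ)) : ℝ) : ℂ))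
        * (∏ j ∈ range (m+1), ((n:ℂ)+j)) / (∏ j ∈ range (m+1), ((n:ℂ)+a+j)) := by
  have hprod : (∏ j ∈ range (m+1), (1 + a/((n:ℂ)+j))) * (∏ j ∈ range (m+1), ((n:ℂ)+j))
      = ∏ j ∈ range (m+1), ((n:ℂ)+a+j) := by
    rw [← Finset.prod_mul_distrib]
    apply Finset.prod_congr rfl
    intro j _
    field_simp [Nj_ne hn2 j]
    ring
  have hexps : Complex.exp (∑ j ∈ range (m+1), Complex.log (1 + a/((n:ℂ)+j)))
      = ∏ j ∈ range (m+1), (1 + a/((n:ℂ)+j)) := by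
    rw [Complex.exp_sum]
    exact Finset.prod_congr rfl fun j _ => Complex.exp_log (one_add_v_ne hn2 ha j)
  have hPv : (∏ j ∈ range (m+1), (1 + a/((n:ℂ)+j))) ≠ 0 :=
    Finset.prod_ne_zero_iff.mpr fun j _ => one_add_v_ne hn2 ha j
  have hPa : (∏ j ∈ range (m+1), ((n:ℂ)+a+j)) ≠ 0 :=
    Finset.prod_ne_zero_iff.mpr fun j _ => NA_ne hn2 ha j
  rw [sum_u_eq hn2 m, Complex.exp_sub, hexps]
  rw [eq_div_iff hPa, ← hprod]
  field_simp

lemma prod_shift (hn2 : 2 ≤ n) (m : ℕ) :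
    (∏ j ∈ range (m+1), ((n:ℂ)+1+j)) * (n:ℂ)
      = (∏ j ∈ range (m+1), ((n:ℂ)+j)) * ((n:ℂ)+((m:ℂ)+1)) := by
  have h2 := Finset.prod_range_succ' (fun k : ℕ => (n:ℂ)+k) (m+1)
  have h3 := Finset.prod_range_succ (fun k : ℕ => (n:ℂ)+k) (m+1)
  simp only [Nat.cast_zero, add_zero, Nat.cast_add, Nat.cast_one] at h2 h3
  have h1 : ∀ j ∈ range (m+1), ((n:ℂ)+1+j) = ((n:ℂ)+((j:ℂ)+1)) := fun j _ => by ring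
  rw [Finset.prod_congr rfl h1, ← h2, h3]

lemma N1j_ne (hn2 : 2 ≤ n) (j : ℕ) : ((n:ℂ) + 1 + j) ≠ 0 := by
  intro h
  have := congrArg Complex.re h
  simp only [Complex.add_re, Complex.natCast_re, Complex.one_re, Complex.zero_re] at this
  have := npos hn2 j
  have h2 : (0:ℝ) ≤ (j:ℝ) := Nat.cast_nonneg j
  have h3 : (0:ℝ) ≤ (n:ℝ) := Nat.cast_nonneg n
  linarith

lemma gammaSeq_ratio (hn2 : 2 ≤ n) (ha : ‖a‖ ≤ ((n:ℝ)-1)/2) (m : ℕ) (hm : 1 ≤ m) :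
    Complex.GammaSeq ((n:ℂ)+a) m / Complex.GammaSeq ((n:ℂ)+1) m * (n:ℂ)^((1:ℂ)-a)
      = Complex.exp (∑ j ∈ range (m+1), u n a j)
        * Complex.exp ((a-1) * ((Real.log (m:ℝ) - Real.log ((n:ℝ)+(m+1)) : ℝ) : ℂ)) := by
  have hnR : (2:ℝ) ≤ (n:ℝ) := by exact_mod_cast hn2
  have hmR : (0:ℝ) < (m:ℝ) := by exact_mod_cast hm
  have hM : ((m:ℂ)) ≠ 0 := by
    exact Nat.cast_ne_zero.mpr (by omega : m ≠ 0)
  have hN : ((n:ℂ)) ≠ 0 := by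
    exact Nat.cast_ne_zero.mpr (by omega : n ≠ 0)
  have hPa : (∏ j ∈ range (m+1), ((n:ℂ)+a+j)) ≠ 0 :=
    Finset.prod_ne_zero_iff.mpr fun j _ => NA_ne hn2 ha j
  have hP1 : (∏ j ∈ range (m+1), ((n:ℂ)+1+j)) ≠ 0 :=
    Finset.prod_ne_zero_iff.mpr fun j _ => N1j_ne hn2 j
  have hfac : ((m.factorial : ℂ)) ≠ 0 := Nat.cast_ne_zero.mpr m.factorial_ne_zero
  have hSpos : (0:ℝ) < (n:ℝ)+(m+1) := by positivity
  have e1 : Complex.exp ((Real.log ((n:ℝ)+(m+1)) : ℝ):ℂ) = (n:ℂ)+((m:ℂ)+1) := by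
    rw [← Complex.ofReal_exp, Real.exp_log hSpos]
    push_cast
    ring
  have e2 : Complex.exp ((Real.log (n:ℝ) : ℝ):ℂ) = (n:ℂ) := by
    rw [← Complex.ofReal_exp, Real.exp_log (by linarith)]
    norm_cast
  have hXexp : Complex.exp (((Real.log (m:ℝ) : ℝ):ℂ)*((n:ℂ)+a)
        + ((Real.log (n:ℝ) : ℝ):ℂ)*(1-a) - ((Real.log (m:ℝ) : ℝ):ℂ)*((n:ℂ)+1))
        * ((n:ℂ)+((m:ℂ)+1))
      = Complex.exp (a * (((Real.log ((n:ℝ)+(m+1)) - Real.log (n:ℝ) : ℝ)):ℂ)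
        + (a-1) * (((Real.log (m:ℝ) - Real.log ((n:ℝ)+(m+1)) : ℝ)):ℂ)) * (n:ℂ) := by
    rw [← e1, ← e2, ← Complex.exp_add, ← Complex.exp_add]
    congr 1
    push_cast
    ring
  have K : Complex.exp (((Real.log (m:ℝ) : ℝ):ℂ)*((n:ℂ)+a)
        + ((Real.log (n:ℝ) : ℝ):ℂ)*(1-a) - ((Real.log (m:ℝ) : ℝ):ℂ)*((n:ℂ)+1))
        * (∏ j ∈ range (m+1), ((n:ℂ)+1+j))
      = Complex.exp (a * (((Real.log ((n:ℝ)+(m+1)) - Real.log (n:ℝ) : ℝ)):ℂ)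
        + (a-1) * (((Real.log (m:ℝ) - Real.log ((n:ℝ)+(m+1)) : ℝ)):ℂ))
        * (∏ j ∈ range (m+1), ((n:ℂ)+j)) := by
    apply mul_right_cancel₀ hN
    calc Complex.exp (((Real.log (m:ℝ) : ℝ):ℂ)*((n:ℂ)+a)
        + ((Real.log (n:ℝ) : ℝ):ℂ)*(1-a) - ((Real.log (m:ℝ) : ℝ):ℂ)*((n:ℂ)+1))
        * (∏ j ∈ range (m+1), ((n:ℂ)+1+j)) * (n:ℂ)
        = ((∏ j ∈ range (m+1), ((n:ℂ)+1+j)) * (n:ℂ))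
          * Complex.exp (((Real.log (m:ℝ) : ℝ):ℂ)*((n:ℂ)+a)
            + ((Real.log (n:ℝ) : ℝ):ℂ)*(1-a) - ((Real.log (m:ℝ) : ℝ):ℂ)*((n:ℂ)+1)) := by
          ring
      _ = ((∏ j ∈ range (m+1), ((n:ℂ)+j)) * ((n:ℂ)+((m:ℂ)+1)))
          * Complex.exp (((Real.log (m:ℝ) : ℝ):ℂ)*((n:ℂ)+a)
            + ((Real.log (n:ℝ) : ℝ):ℂ)*(1-a) - ((Real.log (m:ℝ) : ℝ):ℂ)*((n:ℂ)+1)) := by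
          rw [prod_shift hn2 m]
      _ = (∏ j ∈ range (m+1), ((n:ℂ)+j))
          * (Complex.exp (((Real.log (m:ℝ) : ℝ):ℂ)*((n:ℂ)+a)
            + ((Real.log (n:ℝ) : ℝ):ℂ)*(1-a) - ((Real.log (m:ℝ) : ℝ):ℂ)*((n:ℂ)+1))
            * ((n:ℂ)+((m:ℂ)+1))) := by ring
      _ = (∏ j ∈ range (m+1), ((n:ℂ)+j))
          * (Complex.exp (a * (((Real.log ((n:ℝ)+(m+1)) - Real.log (n:ℝ) : ℝ)):ℂ)
            + (a-1) * (((Real.log (m:ℝ) - Real.log ((n:ℝ)+(m+1)) : ℝ)):ℂ)) * (n:ℂ)) := by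
          rw [hXexp]
      _ = Complex.exp (a * (((Real.log ((n:ℝ)+(m+1)) - Real.log (n:ℝ) : ℝ)):ℂ)
            + (a-1) * (((Real.log (m:ℝ) - Real.log ((n:ℝ)+(m+1)) : ℝ)):ℂ))
            * (∏ j ∈ range (m+1), ((n:ℂ)+j)) * (n:ℂ) := by ring
  rw [exp_sum_u hn2 ha m]
  rw [Complex.GammaSeq, Complex.GammaSeq]
  rw [Complex.cpow_def_of_ne_zero hM ((n:ℂ)+a), Complex.cpow_def_of_ne_zero hM ((n:ℂ)+1),
    Complex.cpow_def_of_ne_zero hN ((1:ℂ)-a)]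
  rw [← Complex.natCast_log (n := m), ← Complex.natCast_log (n := n)]
  have h12 : Complex.exp (((Real.log (m:ℝ) : ℝ):ℂ)*((n:ℂ)+a)
        + ((Real.log (n:ℝ) : ℝ):ℂ)*(1-a) - ((Real.log (m:ℝ) : ℝ):ℂ)*((n:ℂ)+1))
        * Complex.exp (((Real.log (m:ℝ) : ℝ):ℂ)*((n:ℂ)+1))
      = Complex.exp (((Real.log (m:ℝ) : ℝ):ℂ)*((n:ℂ)+a))
        * Complex.exp (((Real.log (n:ℝ) : ℝ):ℂ)*(1-a)) := by
    rw [← Complex.exp_add, ← Complex.exp_add]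
    congr 1
    ring
  have h34 : Complex.exp (a * (((Real.log ((n:ℝ)+(m+1)) - Real.log (n:ℝ) : ℝ)):ℂ)
        + (a-1) * (((Real.log (m:ℝ) - Real.log ((n:ℝ)+(m+1)) : ℝ)):ℂ))
      = Complex.exp (a * (((Real.log ((n:ℝ)+(m+1)) - Real.log (n:ℝ) : ℝ)):ℂ))
        * Complex.exp ((a-1) * (((Real.log (m:ℝ) - Real.log ((n:ℝ)+(m+1)) : ℝ)):ℂ)) :=
    Complex.exp_add _ _
  simp only [Complex.natCast_log, Complex.ofReal_sub] at K h12 h34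
  simp only [Complex.natCast_log, Complex.ofReal_sub]
  generalize ((Real.log ((n:ℝ)+(m+1)) : ℝ) : ℂ) = L at K h34 ⊢
  field_simp
  linear_combination
    (-(∏ j ∈ range (m+1), ((n:ℂ)+1+j))) * h12
    + (Complex.exp (Complex.log (m:ℂ) * ((n:ℂ)+1))) * K
    + (Complex.exp (Complex.log (m:ℂ) * ((n:ℂ)+1)) * (∏ j ∈ range (m+1), ((n:ℂ)+j))) * h34

lemma gamma_eq_exp_tsum (hn2 : 2 ≤ n) (ha : ‖a‖ ≤ ((n:ℝ)-1)/2) :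
    Complex.Gamma ((n:ℂ)+a) / (n.factorial : ℂ) * (n:ℂ)^((1:ℂ)-a)
      = Complex.exp (∑' j : ℕ, u n a j) := by
  have hnR : (2:ℝ) ≤ (n:ℝ) := by exact_mod_cast hn2
  have hfac : ((n.factorial : ℂ)) ≠ 0 := Nat.cast_ne_zero.mpr n.factorial_ne_zero
  have hG1 : Complex.Gamma ((n:ℂ)+1) = (n.factorial : ℂ) := Complex.Gamma_nat_eq_factorial n
  have hA : Tendsto (fun m => Complex.GammaSeq ((n:ℂ)+a) m / Complex.GammaSeq ((n:ℂ)+1) m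
        * (n:ℂ)^((1:ℂ)-a)) atTop
      (𝓝 (Complex.Gamma ((n:ℂ)+a) / (n.factorial : ℂ) * (n:ℂ)^((1:ℂ)-a))) := by
    have := ((Complex.GammaSeq_tendsto_Gamma ((n:ℂ)+a)).div
      (Complex.GammaSeq_tendsto_Gamma ((n:ℂ)+1)) (by rw [hG1]; exact hfac)).mul_const
      ((n:ℂ)^((1:ℂ)-a))
    rwa [hG1] at this
  have hP : Tendsto (fun m => ∑ j ∈ range (m+1), u n a j) atTop (𝓝 (∑' j : ℕ, u n a j)) := by
    have h1 := (summable_u hn2 ha).hasSum.tendsto_sum_nat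
    exact h1.comp (tendsto_add_atTop_nat 1)
  have hr0 : Tendsto (fun m : ℕ => Real.log (m:ℝ) - Real.log ((n:ℝ)+(m+1))) atTop (𝓝 0) := by
    have hq : Tendsto (fun m : ℕ => ((n:ℝ)+1)/(m:ℝ) + 1) atTop (𝓝 1) := by
      have := (tendsto_const_div_atTop_nhds_zero_nat ((n:ℝ)+1)).add_const 1
      simpa using this
    have hlog : Tendsto (fun m : ℕ => Real.log (((n:ℝ)+1)/(m:ℝ) + 1)) atTop (𝓝 0) := by
      have hc := (Real.continuousAt_log (x := 1) one_ne_zero).tendsto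
      rw [Real.log_one] at hc
      exact hc.comp hq
    have heq : ∀ᶠ m : ℕ in atTop, -Real.log (((n:ℝ)+1)/(m:ℝ) + 1)
        = Real.log (m:ℝ) - Real.log ((n:ℝ)+(m+1)) := by
      filter_upwards [eventually_ge_atTop 1] with m hm
      have hmR : (0:ℝ) < (m:ℝ) := by exact_mod_cast hm
      have h1 : ((n:ℝ)+1)/(m:ℝ) + 1 = ((n:ℝ)+(m+1))/(m:ℝ) := by field_simp; ring
      rw [h1, Real.log_div (by positivity) (ne_of_gt hmR)]
      ring
    have := hlog.neg
    rw [neg_zero] at this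
    exact this.congr' heq
  have hr : Tendsto (fun m : ℕ => Complex.exp ((a-1)
        * ((Real.log (m:ℝ) - Real.log ((n:ℝ)+(m+1)) : ℝ) : ℂ))) atTop (𝓝 1) := by
    have h1 : Tendsto (fun m : ℕ => ((Real.log (m:ℝ) - Real.log ((n:ℝ)+(m+1)) : ℝ) : ℂ))
        atTop (𝓝 0) := by
      have := (Complex.continuous_ofReal.tendsto 0).comp hr0
      rw [Complex.ofReal_zero] at this
      exact this
    have h2 := h1.const_mul (a-1)
    rw [mul_zero] at h2
    have h3 := h2.cexp
    rwa [Complex.exp_zero] at h3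
  have hB : Tendsto (fun m => Complex.exp (∑ j ∈ range (m+1), u n a j)
        * Complex.exp ((a-1) * ((Real.log (m:ℝ) - Real.log ((n:ℝ)+(m+1)) : ℝ) : ℂ)))
      atTop (𝓝 (Complex.exp (∑' j : ℕ, u n a j) * 1)) := hP.cexp.mul hr
  have hAB : (fun m => Complex.GammaSeq ((n:ℂ)+a) m / Complex.GammaSeq ((n:ℂ)+1) m
        * (n:ℂ)^((1:ℂ)-a)) =ᶠ[atTop]
      (fun m => Complex.exp (∑ j ∈ range (m+1), u n a j)
        * Complex.exp ((a-1) * ((Real.log (m:ℝ) - Real.log ((n:ℝ)+(m+1)) : ℝ) : ℂ))) := by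
    filter_upwards [eventually_ge_atTop 1] with m hm
    exact gammaSeq_ratio hn2 ha m hm
  have := tendsto_nhds_unique (hA.congr' hAB) hB
  rwa [mul_one] at this

end Stmt14Aux

set_option maxHeartbeats 2000000 in
/-- Quantitative Stirling-type estimate: for `|w| ≤ ρ` and `n ≥ 2θρ + 1`,
`|Γ(n + θw)/n! − n^{θw−1}| ≤ B n^{θ Re(w) − 2}`. -/
theorem stmt_14 (θ ρ : ℝ) (hθ : 0 < θ) (hρ : 1 < ρ) (w : ℂ) (hw : ‖w‖ ≤ ρ)
    (n : ℕ) (hn : 2 * θ * ρ + 1 ≤ (n : ℝ)) :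
    ‖Complex.Gamma (n + θ * w) / (n.factorial : ℂ) -
        (n : ℂ) ^ ((θ : ℂ) * w - 1)‖ ≤
      3 * (θ * ρ + 1 / 2) ^ 2 * Real.exp ((3 / 2) * (θ * ρ + 1 / 2)) *
        (n : ℝ) ^ (θ * w.re - 2) := by
  open Stmt14Aux in
  set a : ℂ := (θ:ℂ) * w with hadef
  have hρ0 : (0:ℝ) < ρ := lt_trans one_pos hρ
  have hθρ : 0 < θ * ρ := mul_pos hθ hρ0
  have habsa : ‖a‖ ≤ θ * ρ := by
    rw [hadef, norm_mul, Complex.norm_real, Real.norm_eq_abs, abs_of_pos hθ]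
    exact mul_le_mul_of_nonneg_left hw hθ.le
  have hn1 : (1:ℝ) < (n:ℝ) := by linarith
  have hn2 : 2 ≤ n := by
    have : 1 < n := by exact_mod_cast hn1
    omega
  have hnR : (2:ℝ) ≤ (n:ℝ) := by exact_mod_cast hn2
  have ha : ‖a‖ ≤ ((n:ℝ)-1)/2 := by
    rw [le_div_iff₀ (by norm_num : (0:ℝ) < 2)]
    linarith
  set c : ℝ := θ * ρ + 1/2 with hcdef
  have hc : 1/2 < c := by rw [hcdef]; linarith
  have hnc : 2*c ≤ (n:ℝ) := by rw [hcdef]; linarith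
  clear_value c
  set T : ℂ := ∑' j : ℕ, u n a j with hTdef
  have hexp := gamma_eq_exp_tsum hn2 ha
  have hT := abs_tsum_u_le hn2 ha
  rw [← hTdef] at hexp hT
  clear_value T
  clear hTdef
  have habsa0 : 0 ≤ ‖a‖ := norm_nonneg a
  have hT1 : ‖T‖ ≤ (c^2 - 1/4)/((n:ℝ)-1) := by
    refine hT.trans ?_
    have h1 : ‖a‖ + ‖a‖ ^ 2 ≤ c^2 - 1/4 := by nlinarith
    apply div_le_div_of_nonneg_right h1 (by linarith) |>.trans_eq rfl
  have hT2 : ‖T‖ ≤ 3*c^2/(n:ℝ) := by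
    refine hT1.trans ?_
    rw [div_le_div_iff₀ (by linarith) (by linarith)]
    nlinarith
  have hT3 : ‖T‖ ≤ 3/2*c := by
    refine hT2.trans ?_
    rw [div_le_iff₀ (by linarith)]
    nlinarith
  have hN : ((n:ℂ)) ≠ 0 := by
    exact Nat.cast_ne_zero.mpr (by omega : n ≠ 0)
  have hpow : (n:ℂ)^((1:ℂ)-a) * (n:ℂ)^(a-1) = 1 := by
    rw [← Complex.cpow_add _ _ hN]
    norm_num
  have key : Complex.Gamma ((n:ℂ)+a) / (n.factorial:ℂ) - (n:ℂ)^(a-1)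
      = (n:ℂ)^(a-1) * (Complex.exp T - 1) := by
    calc Complex.Gamma ((n:ℂ)+a) / (n.factorial:ℂ) - (n:ℂ)^(a-1)
        = (Complex.Gamma ((n:ℂ)+a) / (n.factorial:ℂ) * (n:ℂ)^((1:ℂ)-a)) * (n:ℂ)^(a-1)
          - (n:ℂ)^(a-1) := by
          rw [mul_assoc, hpow, mul_one]
      _ = (n:ℂ)^(a-1) * (Complex.exp T - 1) := by rw [hexp]; ring
  have hexp1 : ‖Complex.exp T - 1‖ ≤ 3*c^2/(n:ℝ) * Real.exp (3/2*c) := by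
    have hEpos := Real.exp_pos (3/2*c)
    rcases le_or_gt (‖T‖) 1 with h1 | h1
    · have h2 := Complex.norm_exp_sub_one_le h1
      have hexp2 : (2:ℝ) ≤ Real.exp (3/2*c) := by
        have e1 : Real.exp 1 * Real.exp (3/2*c - 1) = Real.exp (3/2*c) := by
          rw [← Real.exp_add]; ring_nf
        have e2 : (2.7182818283:ℝ) ≤ Real.exp 1 := le_of_lt Real.exp_one_gt_d9
        have e4 : Real.exp (-(1/4) : ℝ) ≤ Real.exp (3/2*c-1) := Real.exp_le_exp.mpr (by linarith)
        have e5 : (3/4:ℝ) ≤ Real.exp (-(1/4) : ℝ) := by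
          have := Real.add_one_le_exp (-(1/4) : ℝ)
          linarith
        have e6 := mul_le_mul e2 (e5.trans e4) (by norm_num)
          (by positivity : (0:ℝ) ≤ Real.exp 1)
        rw [e1] at e6
        linarith
      have h3 : 0 ≤ 3*c^2/(n:ℝ) := by positivity
      nlinarith [hT2, h2, mul_nonneg h3 (by linarith : (0:ℝ) ≤ Real.exp (3/2*c) - 2),
        norm_nonneg (Complex.exp T - 1)]
    · have hn_lt : (n:ℝ) < c^2 + 3/4 := by
        have h0 : 0 < (n:ℝ) - 1 := by linarith
        rcases lt_or_ge ((n:ℝ)) (c^2+3/4) with h | h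
        · exact h
        · exfalso
          have : (c^2 - 1/4)/((n:ℝ)-1) ≤ 1 := by
            rw [div_le_one h0]; nlinarith
          linarith [hT1.trans this]
      have hc32 : 3/2 < c := by nlinarith
      have hE : (9/2:ℝ) ≤ Real.exp (3/2*c) := by
        have e1 : Real.exp (3/4*c) * Real.exp (3/4*c) = Real.exp (3/2*c) := by
          rw [← Real.exp_add]; ring_nf
        have e2 : 3/4*c + 1 ≤ Real.exp (3/4*c) := Real.add_one_le_exp _
        nlinarith [Real.exp_pos (3/4*c)]
      have h3 : ‖Complex.exp T - 1‖ ≤ Real.exp (3/2*c) + 1 := by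
        calc ‖Complex.exp T - 1‖
            ≤ ‖Complex.exp T‖ + 1 := by
              simpa using norm_sub_le (Complex.exp T) 1
          _ = Real.exp T.re + 1 := by rw [Complex.norm_exp]
          _ ≤ Real.exp (3/2*c) + 1 := by
              have : T.re ≤ 3/2*c := le_trans (Complex.re_le_norm T) hT3
              have := Real.exp_le_exp.mpr this
              linarith
      have hcsq : (0:ℝ) ≤ c^2 - 9/4 := by nlinarith
      have h4 : ((n:ℝ)) * (Real.exp (3/2*c) + 1) ≤ 3*c^2*Real.exp (3/2*c) := by
        have hA := mul_le_mul_of_nonneg_right hn_lt.le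
          (by positivity : (0:ℝ) ≤ Real.exp (3/2*c) + 1)
        nlinarith [hA, hE, hc32, mul_nonneg hcsq (by linarith : (0:ℝ) ≤ Real.exp (3/2*c) - 9/2)]
      rw [div_mul_eq_mul_div, le_div_iff₀ (by linarith : (0:ℝ) < (n:ℝ))]
      nlinarith [mul_le_mul_of_nonneg_right h3 (by linarith : (0:ℝ) ≤ (n:ℝ)), h4]
  have habspow : ‖(n:ℂ)^(a-1)‖ = (n:ℝ)^((θ * w.re - 1 : ℝ)) := by
    have h0 : ((n:ℂ)) = (((n:ℝ)):ℂ) := by push_cast; rfl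
    rw [h0, Complex.norm_cpow_eq_rpow_re_of_pos (by linarith : (0:ℝ) < (n:ℝ))]
    congr 1
    rw [hadef]
    simp [Complex.sub_re, Complex.mul_re]
  rw [key, norm_mul, habspow]
  calc (n:ℝ)^((θ * w.re - 1 : ℝ)) * ‖Complex.exp T - 1‖
      ≤ (n:ℝ)^((θ * w.re - 1 : ℝ)) * (3*c^2/(n:ℝ) * Real.exp (3/2*c)) := by
        apply mul_le_mul_of_nonneg_left hexp1 (Real.rpow_nonneg (by linarith) _)
    _ = 3 * c ^ 2 * Real.exp (3 / 2 * c) * (n:ℝ) ^ (θ * w.re - 2) := by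
        rw [show θ * w.re - 2 = (θ * w.re - 1) + (-1) by ring,
          Real.rpow_add (by linarith : (0:ℝ) < (n:ℝ)), Real.rpow_neg_one]
        field_simp
end
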